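/- arXiv:2410.12044 — 5 statements merged into one kernel-verified Lean document; each statement's English description precedes it below -/
import Mathlib

section
/- Let b ∈ ℂ, T > 0, and φ₀, φ₁ ∈ ℂ. Then there exists a unique twice continuously differentiable function y : [0,T] → ℂ satisfying the boundary value problem −y''(t) − 2i(Im b) y'(t) + |b|² y(t) = 0 for all t ∈ (0,T), y(0) = φ₀, y(T) = φ₁. -/
open MeasureTheory Set

set_option maxHeartbeats 1000000
noncomputable section

/-- The second order differential expression `ℒy = -y'' - 2i(Im b)y' + |b|²y`. -/
def Lexpr (b : ℂ) (y y' y'' : ℝ → ℂ) : ℝ → ℂ :=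
  fun t => -(y'' t) - 2 * Complex.I * (b.im : ℂ) * y' t + ((‖b‖ : ℝ) : ℂ) ^ 2 * y t

/-- `f` is absolutely continuous on `[0,T]` with derivative `f' ∈ L²(0,T)`. -/
def IsW1On (T : ℝ) (f f' : ℝ → ℂ) : Prop :=
  IntegrableOn f' (Icc (0:ℝ) T) ∧
  IntegrableOn (fun t => ‖f' t‖ ^ 2) (Icc (0:ℝ) T) ∧
  ∀ t ∈ Icc (0:ℝ) T, f t = f 0 + ∫ s in (0:ℝ)..t, f' s

/-- A twice continuously differentiable solution (with derivative data `Y'`, `Y''`) of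
the interval boundary value problem `-Y'' - 2i(Im b)Y' + |b|²Y = 0` on `(0,T)`,
`Y(0) = φ₀`, `Y(T) = φ₁`. -/
def IsIntervalSolution (b : ℂ) (T : ℝ) (φ0 φ1 : ℂ) (Y Y' Y'' : ℝ → ℂ) : Prop :=
  (∀ t ∈ Icc (0:ℝ) T, HasDerivWithinAt Y (Y' t) (Icc (0:ℝ) T) t) ∧
  (∀ t ∈ Icc (0:ℝ) T, HasDerivWithinAt Y' (Y'' t) (Icc (0:ℝ) T) t) ∧
  ContinuousOn Y'' (Icc (0:ℝ) T) ∧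
  (∀ t ∈ Ioo (0:ℝ) T, Lexpr b Y Y' Y'' t = 0) ∧
  Y 0 = φ0 ∧ Y T = φ1

/-! ### Auxiliary machinery -/

lemma conj_eq_two_re_sub (b : ℂ) : (2*(b.re:ℂ)) - b = (starRingEnd ℂ) b := by
  have := Complex.add_conj b; push_cast at this; linear_combination -this

lemma conj_eq_sub (b : ℂ) : (starRingEnd ℂ) b = b - 2*Complex.I*b.im := by
  have := Complex.sub_conj b; push_cast at this; linear_combination -this

lemma abs_sq_eq (b : ℂ) : ((‖b‖ : ℝ) : ℂ)^2 = b * (starRingEnd ℂ) b := by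
  rw [← Complex.ofReal_pow, Complex.sq_norm, Complex.mul_conj]

lemma expDeriv (c : ℂ) (t : ℝ) :
    HasDerivAt (fun t : ℝ => Complex.exp (c * t)) (c * Complex.exp (c*t)) t := by
  have h : HasDerivAt (fun t : ℝ => c * (t:ℂ)) c t := by
    simpa using (Complex.ofRealCLM.hasDerivAt (x := t)).const_mul c
  simpa [mul_comm] using h.cexp

lemma cexp_real_ne_one {x : ℝ} (hx : x ≠ 0) : Complex.exp (x:ℂ) ≠ 1 := by
  rw [← Complex.ofReal_exp]
  intro h
  have : Real.exp x = 1 := by exact_mod_cast h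
  exact hx (by simpa using Real.exp_injective (by simpa using this))

/-- Antiderivative of `exp (2 (Re b) t)` vanishing at `0`. -/
def Pfun (b : ℂ) (t : ℝ) : ℂ :=
  if b.re = 0 then (t : ℂ) else (Complex.exp ((2*(b.re:ℂ)) * t) - 1) / (2*(b.re:ℂ))

lemma Pfun_zero (b : ℂ) : Pfun b 0 = 0 := by
  unfold Pfun; split_ifs <;> simp

lemma hasDerivAt_Pfun (b : ℂ) (t : ℝ) :
    HasDerivAt (Pfun b) (Complex.exp ((2*(b.re:ℂ)) * t)) t := by
  by_cases ha : b.re = 0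
  · have h : HasDerivAt (fun t : ℝ => (t:ℂ)) 1 t := by
      exact (Complex.ofRealCLM.hasDerivAt (x := t))
    have : Pfun b = fun t : ℝ => (t:ℂ) := by funext s; simp [Pfun, ha]
    rw [this, ha]
    simpa using h
  · have hc : (2*(b.re:ℂ)) ≠ 0 := by
      simp only [ne_eq, mul_eq_zero, OfNat.ofNat_ne_zero, false_or, Complex.ofReal_eq_zero]
      exact ha
    have h : HasDerivAt (fun t : ℝ => (Complex.exp ((2*(b.re:ℂ)) * t) - 1) / (2*(b.re:ℂ)))
        (((2*(b.re:ℂ)) * Complex.exp ((2*(b.re:ℂ)) * t)) / (2*(b.re:ℂ))) t :=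
      ((expDeriv (2*(b.re:ℂ)) t).sub_const 1).div_const _
    have : Pfun b = fun t : ℝ => (Complex.exp ((2*(b.re:ℂ)) * t) - 1) / (2*(b.re:ℂ)) := by
      funext s; simp [Pfun, ha]
    rw [this]
    convert h using 1
    field_simp
    exact (div_self (Complex.ofReal_ne_zero.mpr ha)).symm

/-- The general solution of `ℒ y = 0` with `y 0 = c`, `y' 0 + b y 0 = d`. -/
def Sol (b c d : ℂ) (t : ℝ) : ℂ := (c + d * Pfun b t) * Complex.exp (-b * t)

def Sol' (b c d : ℂ) (t : ℝ) : ℂ :=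
  d * Complex.exp ((starRingEnd ℂ) b * t) - b * Sol b c d t

def Sol'' (b c d : ℂ) (t : ℝ) : ℂ :=
  d * (starRingEnd ℂ) b * Complex.exp ((starRingEnd ℂ) b * t) - b * Sol' b c d t

lemma exp_mul_exp_conj (b : ℂ) (t : ℝ) :
    Complex.exp ((2*(b.re:ℂ)) * t) * Complex.exp (-b * t)
      = Complex.exp ((starRingEnd ℂ) b * t) := by
  rw [← Complex.exp_add]
  congr 1
  linear_combination (t:ℂ) * conj_eq_two_re_sub b

lemma hasDerivAt_Sol (b c d : ℂ) (t : ℝ) : HasDerivAt (Sol b c d) (Sol' b c d t) t := by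
  unfold Sol Sol'
  have h1 : HasDerivAt (fun t : ℝ => c + d * Pfun b t)
      (d * Complex.exp ((2*(b.re:ℂ)) * t)) t :=
    ((hasDerivAt_Pfun b t).const_mul d).const_add c
  have h2 : HasDerivAt (fun t : ℝ => Complex.exp (-b * t))
      (-b * Complex.exp (-b * t)) t := expDeriv (-b) t
  have h := h1.mul h2
  refine h.congr_deriv (Eq.symm ?_)
  simp only [Sol]
  rw [← exp_mul_exp_conj b t]
  ring

lemma hasDerivAt_Sol' (b c d : ℂ) (t : ℝ) : HasDerivAt (Sol' b c d) (Sol'' b c d t) t := by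
  unfold Sol' Sol''
  have h1 : HasDerivAt (fun t : ℝ => d * Complex.exp ((starRingEnd ℂ) b * t))
      ((starRingEnd ℂ) b * Complex.exp ((starRingEnd ℂ) b * t) * d) t := by
    simpa [mul_comm] using (expDeriv ((starRingEnd ℂ) b) t).const_mul d
  have h2 := (hasDerivAt_Sol b c d t).const_mul b
  have h := h1.sub h2
  refine h.congr_deriv (Eq.symm ?_)
  simp only [Sol']
  ring

lemma Lexpr_Sol (b c d : ℂ) (t : ℝ) : Lexpr b (Sol b c d) (Sol' b c d) (Sol'' b c d) t = 0 := by
  simp only [Lexpr, Sol'']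
  rw [abs_sq_eq b, conj_eq_sub b]
  simp only [Sol']
  rw [conj_eq_sub b]
  ring

lemma const_of_deriv0 {T : ℝ} (hT : 0 < T) {F : ℝ → ℂ}
    (hF : ∀ t ∈ Icc (0:ℝ) T, HasDerivWithinAt F 0 (Icc (0:ℝ) T) t) :
    ∀ t ∈ Icc (0:ℝ) T, F t = F 0 := by
  intro t ht
  refine constant_of_derivWithin_zero (f := F) (a := 0) (b := T) ?_ ?_ t ht
  · intro s hs; exact (hF s hs).differentiableWithinAt
  · intro s hs
    exact (hF s (mem_Icc_of_Ico hs)).derivWithin (uniqueDiffOn_Icc hT s (mem_Icc_of_Ico hs))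

lemma eq_on_of_deriv_eq {T : ℝ} (hT : 0 < T) {F G F' : ℝ → ℂ}
    (hF : ∀ t ∈ Icc (0:ℝ) T, HasDerivWithinAt F (F' t) (Icc (0:ℝ) T) t)
    (hG : ∀ t ∈ Icc (0:ℝ) T, HasDerivWithinAt G (F' t) (Icc (0:ℝ) T) t)
    (h0 : F 0 = G 0) : ∀ t ∈ Icc (0:ℝ) T, F t = G t := by
  intro t ht
  have h := const_of_deriv0 hT (F := fun t => F t - G t)
    (fun s hs => by have := (hF s hs).sub (hG s hs); rw [sub_self] at this; exact this) t ht
  simp only [h0, sub_self] at h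
  linear_combination h

lemma zero_on_Icc_of_zero_on_Ioo {T : ℝ} (hT : 0 < T) {f : ℝ → ℂ}
    (hf : ContinuousOn f (Icc (0:ℝ) T)) (h : ∀ t ∈ Ioo (0:ℝ) T, f t = 0) :
    ∀ t ∈ Icc (0:ℝ) T, f t = 0 := by
  intro t ht
  have hcl : t ∈ closure (Ioo (0:ℝ) T) := by rwa [closure_Ioo hT.ne]
  have hne : (nhdsWithin t (Ioo (0:ℝ) T)).NeBot := mem_closure_iff_nhdsWithin_neBot.mp hcl
  have h1 : Filter.Tendsto f (nhdsWithin t (Ioo (0:ℝ) T)) (nhds (f t)) :=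
    (hf t ht).mono Ioo_subset_Icc_self
  have h2 : Filter.Tendsto f (nhdsWithin t (Ioo (0:ℝ) T)) (nhds 0) :=
    Filter.Tendsto.congr' (Filter.eventuallyEq_of_mem self_mem_nhdsWithin
      fun s hs => (h s hs).symm) tendsto_const_nhds
  exact tendsto_nhds_unique h1 h2

lemma exp_neg_mul_exp (c : ℂ) (t : ℝ) :
    Complex.exp (-c * t) * Complex.exp (c * t) = 1 := by
  rw [← Complex.exp_add]
  rw [show -c * (t:ℂ) + c * t = 0 by ring]
  exact Complex.exp_zero

/-- Every solution of the ODE on `[0,T]` is given by the explicit formula. -/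
lemma master (b : ℂ) {T : ℝ} (hT : 0 < T) (W W' W'' : ℝ → ℂ)
    (h1 : ∀ t ∈ Icc (0:ℝ) T, HasDerivWithinAt W (W' t) (Icc (0:ℝ) T) t)
    (h2 : ∀ t ∈ Icc (0:ℝ) T, HasDerivWithinAt W' (W'' t) (Icc (0:ℝ) T) t)
    (h3 : ContinuousOn W'' (Icc (0:ℝ) T))
    (h4 : ∀ t ∈ Ioo (0:ℝ) T, Lexpr b W W' W'' t = 0) :
    ∀ t ∈ Icc (0:ℝ) T, W t = Sol b (W 0) (W' 0 + b * W 0) t := by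
  have hcontW : ContinuousOn W (Icc (0:ℝ) T) := fun t ht => (h1 t ht).continuousWithinAt
  have hcontW' : ContinuousOn W' (Icc (0:ℝ) T) := fun t ht => (h2 t ht).continuousWithinAt
  have hL0 : ∀ t ∈ Icc (0:ℝ) T, Lexpr b W W' W'' t = 0 := by
    refine zero_on_Icc_of_zero_on_Ioo hT ?_ h4
    unfold Lexpr
    exact (h3.neg.sub (continuousOn_const.mul hcontW')).add (continuousOn_const.mul hcontW)
  have hL : ∀ t ∈ Icc (0:ℝ) T,
      W'' t = b * (starRingEnd ℂ) b * W t - 2*Complex.I*(b.im:ℂ) * W' t := by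
    intro t ht
    have h := hL0 t ht
    simp only [Lexpr] at h
    have h2' := abs_sq_eq b
    linear_combination -h + (W t) * h2'
  set g : ℝ → ℂ := fun t => W' t + b * W t with hg
  have hgd : ∀ t ∈ Icc (0:ℝ) T,
      HasDerivWithinAt g ((starRingEnd ℂ) b * g t) (Icc (0:ℝ) T) t := by
    intro t ht
    have hd := (h2 t ht).add ((h1 t ht).const_mul b)
    refine hd.congr_deriv (Eq.symm ?_)
    rw [hL t ht, conj_eq_sub b]
    simp only [hg]
    ring
  have hh : ∀ t ∈ Icc (0:ℝ) T, g t = g 0 * Complex.exp ((starRingEnd ℂ) b * t) := by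
    have hder : ∀ t ∈ Icc (0:ℝ) T,
        HasDerivWithinAt (fun t => g t * Complex.exp (-(starRingEnd ℂ) b * t)) 0
          (Icc (0:ℝ) T) t := by
      intro t ht
      have hd := (hgd t ht).mul ((expDeriv (-(starRingEnd ℂ) b) t).hasDerivWithinAt)
      refine hd.congr_deriv (Eq.symm ?_)
      ring
    have hconst := const_of_deriv0 hT hder
    intro t ht
    have h := hconst t ht
    simp only [Complex.ofReal_zero, mul_zero, Complex.exp_zero, mul_one] at h
    calc g t = g t * (Complex.exp (-(starRingEnd ℂ) b * t)
          * Complex.exp ((starRingEnd ℂ) b * t)) := by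
            rw [exp_neg_mul_exp, mul_one]
      _ = (g t * Complex.exp (-(starRingEnd ℂ) b * t))
          * Complex.exp ((starRingEnd ℂ) b * t) := by ring
      _ = g 0 * Complex.exp ((starRingEnd ℂ) b * t) := by rw [h]
  have hk : ∀ t ∈ Icc (0:ℝ) T,
      W t * Complex.exp (b * t) = W 0 + g 0 * Pfun b t := by
    refine eq_on_of_deriv_eq hT (F' := fun t => g 0 * Complex.exp ((2*(b.re:ℂ)) * t)) ?_ ?_ ?_
    · intro t ht
      have hd := (h1 t ht).mul ((expDeriv b t).hasDerivWithinAt)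
      refine hd.congr_deriv (Eq.symm ?_)
      have hstep : W' t * Complex.exp (b * t) + W t * (b * Complex.exp (b * t))
          = g t * Complex.exp (b * t) := by
        simp only [hg]; ring
      rw [hstep, hh t ht, mul_assoc (g 0), ← Complex.exp_add,
        show (starRingEnd ℂ) b * (t:ℂ) + b*t = (2*(b.re:ℂ))*t from by
          linear_combination -(t:ℂ) * (conj_eq_two_re_sub b)]
    · intro t ht
      exact (((hasDerivAt_Pfun b t).const_mul (g 0)).const_add (W 0)).hasDerivWithinAt
    · simp [Pfun_zero]
  intro t ht
  have h := hk t ht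
  unfold Sol
  calc W t = W t * (Complex.exp (b * t) * Complex.exp (-b * t)) := by
        rw [mul_comm (Complex.exp (b * (t:ℝ)))]
        rw [exp_neg_mul_exp, mul_one]
    _ = (W t * Complex.exp (b * t)) * Complex.exp (-b * t) := by ring
    _ = (W 0 + (W' 0 + b * W 0) * Pfun b t) * Complex.exp (-b * t) := by rw [h]

/-- boundary value problem (3) for the optimal trajectory on the
interval.  For every `b ∈ ℂ`, `T > 0` and `φ₀, φ₁ ∈ ℂ` there is a unique twice
continuously differentiable `Y : [0,T] → ℂ` with
`-Y'' - 2i(Im b)Y' + |b|²Y = 0` on `(0,T)`, `Y(0) = φ₀`, `Y(T) = φ₁`. -/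
theorem interval_bvp_exists_unique (b : ℂ) (T : ℝ) (hT : 0 < T) (φ0 φ1 : ℂ) :
    ∃ Y Y' Y'' : ℝ → ℂ, IsIntervalSolution b T φ0 φ1 Y Y' Y'' ∧
      ∀ Z Z' Z'' : ℝ → ℂ, IsIntervalSolution b T φ0 φ1 Z Z' Z'' →
        ∀ t ∈ Icc (0:ℝ) T, Z t = Y t := by
  
  have hPT : Pfun b T ≠ 0 := by
    unfold Pfun
    by_cases ha : b.re = 0
    · rw [if_pos ha]
      exact_mod_cast hT.ne'
    · rw [if_neg ha]
      have hc : (2*(b.re:ℂ)) ≠ 0 := by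
        simp only [ne_eq, mul_eq_zero, OfNat.ofNat_ne_zero, false_or, Complex.ofReal_eq_zero]
        exact ha
      apply div_ne_zero _ hc
      rw [sub_ne_zero]
      rw [show (2*(b.re:ℂ)) * (T:ℝ) = ((2*b.re*T : ℝ) : ℂ) by push_cast; ring]
      exact cexp_real_ne_one (mul_ne_zero (mul_ne_zero two_ne_zero ha) hT.ne')
  set d : ℂ := (φ1 * Complex.exp (b*T) - φ0) / Pfun b T with hd
  have hdP : d * Pfun b T = φ1 * Complex.exp (b*T) - φ0 := div_mul_cancel₀ _ hPT
  have hY0 : Sol b φ0 d 0 = φ0 := by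
    unfold Sol
    simp [Pfun_zero]
  have hYT : Sol b φ0 d T = φ1 := by
    unfold Sol
    rw [hdP]
    calc (φ0 + (φ1 * Complex.exp (b*T) - φ0)) * Complex.exp (-b*T)
        = φ1 * (Complex.exp (-b*T) * Complex.exp (b*T)) := by ring
      _ = φ1 := by rw [exp_neg_mul_exp, mul_one]
  refine ⟨Sol b φ0 d, Sol' b φ0 d, Sol'' b φ0 d,
    ⟨fun t _ => (hasDerivAt_Sol b φ0 d t).hasDerivWithinAt,
     fun t _ => (hasDerivAt_Sol' b φ0 d t).hasDerivWithinAt,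
     ?_, fun t _ => Lexpr_Sol b φ0 d t, hY0, hYT⟩, ?_⟩
  · -- continuity of Sol''
    have hc1 : Continuous (Sol' b φ0 d) :=
      continuous_iff_continuousAt.mpr fun t => (hasDerivAt_Sol' b φ0 d t).continuousAt
    have hc2 : Continuous fun t : ℝ => Complex.exp ((starRingEnd ℂ) b * t) :=
      Complex.continuous_exp.comp (continuous_const.mul Complex.continuous_ofReal)
    exact (((continuous_const.mul hc2).sub (continuous_const.mul hc1)).continuousOn :
      ContinuousOn (Sol'' b φ0 d) _)
  · rintro Z Z' Z'' ⟨g1, g2, g3, g4, g5, g6⟩ t ht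
    have hm := master b hT Z Z' Z'' g1 g2 g3 g4
    have hTin : T ∈ Icc (0:ℝ) T := ⟨hT.le, le_refl T⟩
    have hZT := hm T hTin
    rw [g6] at hZT
    have hZ0 : Z 0 = φ0 := g5
    have hdZ : Z' 0 + b * Z 0 = d := by
      have hq : (φ0 + (Z' 0 + b * Z 0) * Pfun b T) * Complex.exp (-b*T) = φ1 := by
        rw [hZT]
        unfold Sol
        rw [hZ0]
      have h2 : φ0 + (Z' 0 + b * Z 0) * Pfun b T = φ1 * Complex.exp (b*T) := by
        calc φ0 + (Z' 0 + b * Z 0) * Pfun b T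
            = ((φ0 + (Z' 0 + b * Z 0) * Pfun b T) * Complex.exp (-b*T))
              * Complex.exp (b*T) := by
                rw [mul_assoc, exp_neg_mul_exp, mul_one]
          _ = φ1 * Complex.exp (b*T) := by rw [hq]
      rw [hd, eq_div_iff hPT]
      linear_combination h2
    rw [hm t ht, hdZ, hZ0]
end
end

section
/- Let b ∈ ℂ, T > 0, φ₀, φ₁ ∈ ℂ, and let y : [0,T] → ℂ be the (unique) twice continuously differentiable solution of −y'' − 2i(Im b) y' + |b|² y = 0 on (0,T) with y(0) = φ₀, y(T) = φ₁. Then for every absolutely continuous z : [0,T] → ℂ with derivative z' ∈ L²(0,T) and z(0) = φ₀, z(T) = φ₁, one has ∫₀ᵀ |y'(t) + b y(t)|² dt ≤ ∫₀ᵀ |z'(t) + b z(t)|² dt, with equality if and only if z = y. Consequently, the optimal control u = y' + by, minimizing the L²(0,T) norm of the control steering the system y' + by = u from y(0) = φ₀ to y(T) = φ₁, exists and is unique. -/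
open MeasureTheory Set

noncomputable section

lemma hasDerivAt_cexp_mul (d : ℂ) (t : ℝ) :
    HasDerivAt (fun s : ℝ => Complex.exp (d * s)) (d * Complex.exp (d * t)) t := by
  have h1 : HasDerivAt (fun s : ℝ => ((s : ℂ))) 1 t := (hasDerivAt_id t).ofReal_comp
  have h2 : HasDerivAt (fun s : ℝ => d * (s : ℂ)) d t := by
    simpa using h1.const_mul d
  simpa [mul_comm] using h2.cexp

lemma continuous_cexp_mul (d : ℂ) : Continuous fun s : ℝ => Complex.exp (d * s) :=
  Complex.continuous_exp.comp (continuous_const.mul Complex.continuous_ofReal)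

/-- Integration by parts against the primitive of an integrable function. -/
lemma parts_aux (T : ℝ) (hT : 0 ≤ T) (g g' f : ℝ → ℂ)
    (hg : ∀ t, HasDerivAt g (g' t) t) (hg' : Continuous g')
    (hf : IntegrableOn f (Icc (0:ℝ) T)) :
    ∫ t in Icc (0:ℝ) T, (g t * f t + g' t * ∫ s in (0:ℝ)..t, f s)
      = g T * ∫ s in (0:ℝ)..T, f s := by
  have hgc : Continuous g := by
    rw [continuous_iff_continuousAt]; exact fun t => (hg t).continuousAt
  set f0 : ℝ → ℂ := (Icc (0:ℝ) T).indicator f with hf0def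
  have hf0 : Integrable f0 volume := (integrable_indicator_iff measurableSet_Icc).2 hf
  have hprim : ∀ t ∈ Icc (0:ℝ) T, (∫ s in (0:ℝ)..t, f s) = ∫ s in (0:ℝ)..t, f0 s := by
    intro t ht
    refine intervalIntegral.integral_congr fun s hs => ?_
    rw [uIcc_of_le ht.1] at hs
    exact (Set.indicator_of_mem (α := ℝ) (M := ℂ)
      (⟨hs.1, hs.2.trans ht.2⟩ : s ∈ Icc (0:ℝ) T) f).symm
  set μ := volume.restrict (Ioc (0:ℝ) T) with hμ
  haveI : IsFiniteMeasure μ := ⟨by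
    rw [hμ, Measure.restrict_apply_univ]; exact measure_Ioc_lt_top⟩
  set K : ℝ × ℝ → ℂ := fun p => if p.2 ≤ p.1 then g' p.1 * f0 p.2 else 0 with hK
  have hKind : K = ({p : ℝ × ℝ | p.2 ≤ p.1}).indicator (fun p => g' p.1 * f0 p.2) := by
    funext p; by_cases h : p.2 ≤ p.1 <;>
      simp [hK, h, Set.indicator_apply, Set.mem_setOf_eq]
  have hset : MeasurableSet {p : ℝ × ℝ | p.2 ≤ p.1} :=
    measurableSet_le measurable_snd measurable_fst
  have h1 : AEStronglyMeasurable (fun p : ℝ × ℝ => g' p.1 * f0 p.2) (μ.prod μ) :=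
    ((hg'.comp continuous_fst).aestronglyMeasurable).mul
      ((hf0.aestronglyMeasurable.restrict).comp_snd)
  have hKm : AEStronglyMeasurable K (μ.prod μ) := by
    rw [hKind]; exact h1.indicator hset
  obtain ⟨C, hC⟩ :=
    isCompact_Icc.exists_bound_of_continuousOn (hg'.continuousOn (s := Icc (0:ℝ) T))
  set C' := max C 0 with hC'
  have hbd : ∀ᵐ p ∂(μ.prod μ), ‖K p‖ ≤ C' * ‖f0 p.2‖ := by
    have hmem : ∀ᵐ p ∂(μ.prod μ), p ∈ (Ioc (0:ℝ) T) ×ˢ (Ioc (0:ℝ) T) := by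
      rw [hμ, Measure.prod_restrict]
      exact ae_restrict_mem (measurableSet_Ioc.prod measurableSet_Ioc)
    filter_upwards [hmem] with p hp
    by_cases h : p.2 ≤ p.1
    · simp only [hK, if_pos h, norm_mul]
      have h2 : ‖g' p.1‖ ≤ C' := (hC p.1 ⟨hp.1.1.le, hp.1.2⟩).trans (le_max_left _ _)
      exact mul_le_mul_of_nonneg_right h2 (norm_nonneg _)
    · simp only [hK, if_neg h, norm_zero]; positivity
  have hdom : Integrable (fun p : ℝ × ℝ => C' * ‖f0 p.2‖) (μ.prod μ) := by
    have h2 : Integrable (fun s => C' * ‖f0 s‖) μ := ((hf0.norm.restrict).const_mul C')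
    simpa using Integrable.mul_prod (integrable_const (μ := μ) (1:ℝ)) h2
  have hKint : Integrable K (μ.prod μ) := hdom.mono' hKm hbd
  have hL : ∀ t ∈ Ioc (0:ℝ) T, (∫ s, K (t, s) ∂μ) = g' t * ∫ s in (0:ℝ)..t, f0 s := by
    intro t ht
    have e1 : (fun s => K (t, s)) = (Iic t).indicator (fun s => g' t * f0 s) := by
      funext s; by_cases h : s ≤ t <;>
        simp [hK, h, Set.indicator_apply, Set.mem_Iic]
    rw [e1, integral_indicator measurableSet_Iic, hμ,
      Measure.restrict_restrict measurableSet_Iic]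
    have e2 : Iic t ∩ Ioc (0:ℝ) T = Ioc (0:ℝ) t := by
      ext x; simp only [mem_inter_iff, mem_Iic, mem_Ioc]
      constructor
      · rintro ⟨h1, h2, h3⟩; exact ⟨h2, h1⟩
      · rintro ⟨h1, h2⟩; exact ⟨h2, h1, h2.trans ht.2⟩
    rw [e2, intervalIntegral.integral_of_le ht.1.le, ← integral_const_mul]
  have hR : ∀ s ∈ Ioc (0:ℝ) T, (∫ t, K (t, s) ∂μ) = (g T - g s) * f0 s := by
    intro s hs
    have e1 : (fun t => K (t, s)) = (Ici s).indicator (fun t => g' t * f0 s) := by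
      funext t; by_cases h : s ≤ t <;>
        simp [hK, h, Set.indicator_apply, Set.mem_Ici]
    rw [e1, integral_indicator measurableSet_Ici, hμ,
      Measure.restrict_restrict measurableSet_Ici]
    have e2 : Ici s ∩ Ioc (0:ℝ) T = Icc s T := by
      ext x; simp only [mem_inter_iff, mem_Ici, mem_Ioc, mem_Icc]
      constructor
      · rintro ⟨h1, h2, h3⟩; exact ⟨h1, h3⟩
      · rintro ⟨h1, h2⟩; exact ⟨h1, hs.1.trans_le h1, h2⟩
    have e3 : (∫ t in Icc s T, g' t) = g T - g s := by
      rw [integral_Icc_eq_integral_Ioc, ← intervalIntegral.integral_of_le hs.2]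
      exact intervalIntegral.integral_eq_sub_of_hasDerivAt (fun t _ => hg t)
        (hg'.intervalIntegrable s T)
    rw [e2, integral_mul_const, e3]
  have hswap : (∫ t, (∫ s, K (t, s) ∂μ) ∂μ) = ∫ s, (∫ t, K (t, s) ∂μ) ∂μ :=
    integral_integral_swap (f := fun t s => K (t, s)) hKint
  have hLHS : (∫ t, (∫ s, K (t, s) ∂μ) ∂μ)
      = ∫ t in Ioc (0:ℝ) T, g' t * ∫ s in (0:ℝ)..t, f0 s := by
    rw [hμ]
    exact integral_congr_ae ((ae_restrict_mem measurableSet_Ioc).mono fun t ht => hL t ht)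
  have hRHS : (∫ s, (∫ t, K (t, s) ∂μ) ∂μ)
      = ∫ s in Ioc (0:ℝ) T, (g T - g s) * f0 s := by
    rw [hμ]
    exact integral_congr_ae ((ae_restrict_mem measurableSet_Ioc).mono fun s hs => hR s hs)
  have hgf0 : IntegrableOn (fun t => g t * f0 t) (Ioc (0:ℝ) T) := by
    have : IntegrableOn (fun t => g t * f0 t) (Icc (0:ℝ) T) := by
      obtain ⟨D, hD⟩ :=
        isCompact_Icc.exists_bound_of_continuousOn (hgc.continuousOn (s := Icc (0:ℝ) T))
      refine Integrable.mono' ((hf0.norm.restrict).const_mul (max D 0))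
        ((hgc.aestronglyMeasurable.restrict).mul (hf0.aestronglyMeasurable.restrict)) ?_
      filter_upwards [ae_restrict_mem measurableSet_Icc] with t ht
      rw [norm_mul]
      exact mul_le_mul_of_nonneg_right ((hD t ht).trans (le_max_left _ _)) (norm_nonneg _)
    exact this.mono_set Ioc_subset_Icc_self
  have hF0c : Continuous (fun t => ∫ s in (0:ℝ)..t, f0 s) := hf0.continuous_primitive 0
  have hg'F0 : IntegrableOn (fun t => g' t * ∫ s in (0:ℝ)..t, f0 s) (Ioc (0:ℝ) T) :=
    ((hg'.mul hF0c).continuousOn.integrableOn_compact isCompact_Icc).mono_set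
      Ioc_subset_Icc_self
  have key : (∫ t in Ioc (0:ℝ) T, (g t * f0 t + g' t * ∫ s in (0:ℝ)..t, f0 s))
      = g T * ∫ s in (0:ℝ)..T, f0 s := by
    rw [integral_add hgf0 hg'F0, ← hLHS, hswap, hRHS]
    have : (∫ s in Ioc (0:ℝ) T, (g T - g s) * f0 s)
        = g T * (∫ s in Ioc (0:ℝ) T, f0 s) - ∫ s in Ioc (0:ℝ) T, g s * f0 s := by
      rw [← integral_const_mul, ← integral_sub ((hf0.restrict).const_mul (g T)) hgf0]
      congr 1; funext s; ring
    rw [this, intervalIntegral.integral_of_le hT]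
    ring
  calc ∫ t in Icc (0:ℝ) T, (g t * f t + g' t * ∫ s in (0:ℝ)..t, f s)
      = ∫ t in Ioc (0:ℝ) T, (g t * f t + g' t * ∫ s in (0:ℝ)..t, f s) :=
        integral_Icc_eq_integral_Ioc
    _ = ∫ t in Ioc (0:ℝ) T, (g t * f0 t + g' t * ∫ s in (0:ℝ)..t, f0 s) := by
        refine setIntegral_congr_fun measurableSet_Ioc fun t ht => ?_
        have ht' : t ∈ Icc (0:ℝ) T := ⟨ht.1.le, ht.2⟩
        rw [hprim t ht']
        simp only [hf0def]
        rw [Set.indicator_of_mem ht' f]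
    _ = g T * ∫ s in (0:ℝ)..T, f0 s := key
    _ = g T * ∫ s in (0:ℝ)..T, f s := by rw [hprim T ⟨hT, le_rfl⟩]

lemma primitive_continuousOn (T : ℝ) (f : ℝ → ℂ) (hf : IntegrableOn f (Icc (0:ℝ) T)) :
    ContinuousOn (fun t => ∫ s in (0:ℝ)..t, f s) (Icc (0:ℝ) T) := by
  set f0 : ℝ → ℂ := (Icc (0:ℝ) T).indicator f with hf0def
  have hf0 : Integrable f0 volume := (integrable_indicator_iff measurableSet_Icc).2 hf
  refine ((hf0.continuous_primitive 0).continuousOn).congr fun t ht => ?_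
  refine intervalIntegral.integral_congr fun s hs => ?_
  rw [uIcc_of_le ht.1] at hs
  exact (Set.indicator_of_mem (α := ℝ) (M := ℂ)
    (⟨hs.1, hs.2.trans ht.2⟩ : s ∈ Icc (0:ℝ) T) f).symm

lemma ae_zero_of_prim_zero (T : ℝ) (hT : 0 ≤ T) (f : ℝ → ℂ)
    (hf : IntegrableOn f (Icc (0:ℝ) T))
    (h0 : ∀ t ∈ Icc (0:ℝ) T, (∫ s in (0:ℝ)..t, f s) = 0) :
    ∀ᵐ t ∂(volume.restrict (Icc (0:ℝ) T)), f t = 0 := by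
  set f0 : ℝ → ℂ := (Icc (0:ℝ) T).indicator f with hf0def
  have hf0 : Integrable f0 volume := (integrable_indicator_iff measurableSet_Icc).2 hf
  have hloc : LocallyIntegrable f0 volume := hf0.locallyIntegrable
  have hzero : ∀ᵐ x ∂volume, f0 x = 0 := by
    refine ae_eq_zero_of_integral_contDiff_smul_eq_zero hloc fun g hg hgsupp => ?_
    have hgd : ∀ t : ℝ, HasDerivAt (fun s : ℝ => ((g s : ℝ) : ℂ)) ((deriv g t : ℝ) : ℂ) t :=
      fun t => ((hg.differentiable (by simp)).differentiableAt.hasDerivAt).ofReal_comp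
    have hgc' : Continuous fun t : ℝ => ((deriv g t : ℝ) : ℂ) :=
      Complex.continuous_ofReal.comp (hg.continuous_deriv (by exact_mod_cast le_top))
    have hp := parts_aux T hT _ _ f hgd hgc' hf
    have e1 : (∫ t in Icc (0:ℝ) T,
        (((g t : ℝ) : ℂ) * f t + ((deriv g t : ℝ) : ℂ) * ∫ s in (0:ℝ)..t, f s))
        = ∫ t in Icc (0:ℝ) T, ((g t : ℝ) : ℂ) * f t :=
      setIntegral_congr_fun measurableSet_Icc fun t ht => by
        rw [h0 t ht, mul_zero, add_zero]
    rw [e1, h0 T ⟨hT, le_rfl⟩, mul_zero] at hp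
    calc ∫ x, g x • f0 x
        = ∫ x, (Icc (0:ℝ) T).indicator (fun x => ((g x : ℝ) : ℂ) * f x) x := by
          congr 1; funext x
          by_cases h : x ∈ Icc (0:ℝ) T <;>
            simp [hf0def, h, Set.indicator_of_mem, Set.indicator_of_notMem,
              Complex.real_smul]
      _ = ∫ x in Icc (0:ℝ) T, ((g x : ℝ) : ℂ) * f x :=
          integral_indicator measurableSet_Icc
      _ = 0 := hp
  filter_upwards [ae_restrict_of_ae hzero, ae_restrict_mem measurableSet_Icc] with t h1 h2
  rw [hf0def] at h1
  rwa [Set.indicator_of_mem h2 f] at h1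

lemma norm_add_sq_complex (x y : ℂ) :
    ‖x + y‖ ^ 2 = ‖x‖ ^ 2 + 2 * ((starRingEnd ℂ) x * y).re + ‖y‖ ^ 2 := by
  simp only [Complex.sq_norm]
  rw [Complex.normSq_add]
  have : (x * (starRingEnd ℂ) y).re = ((starRingEnd ℂ) x * y).re := by
    simp [Complex.mul_re, Complex.conj_re, Complex.conj_im]
    try ring
  rw [this]; ring

/-- The solution `Y` of the boundary value problem (3) minimizes the
control norm `‖z' + bz‖_{L²(0,T)}` among all absolutely continuous trajectories `z`
with `z' ∈ L²(0,T)` steering the system from `φ₀` to `φ₁`, with equality only for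
`z = Y`; hence the optimal control exists and is unique. -/
theorem interval_optimal_control (b : ℂ) (T : ℝ) (hT : 0 < T) (φ0 φ1 : ℂ)
    (Y Y' Y'' : ℝ → ℂ) (hY : IsIntervalSolution b T φ0 φ1 Y Y' Y'') :
    ∀ z z' : ℝ → ℂ, IsW1On T z z' → z 0 = φ0 → z T = φ1 →
      (∫ t in Icc (0:ℝ) T, ‖Y' t + b * Y t‖ ^ 2) ≤
        (∫ t in Icc (0:ℝ) T, ‖z' t + b * z t‖ ^ 2) ∧
      ((∫ t in Icc (0:ℝ) T, ‖Y' t + b * Y t‖ ^ 2) =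
          (∫ t in Icc (0:ℝ) T, ‖z' t + b * z t‖ ^ 2) ↔
        ∀ t ∈ Icc (0:ℝ) T, z t = Y t) := by
  obtain ⟨hY1, hY2, hY3, hY4, hY5, hY6⟩ := hY
  intro z z' hz hz0 hzT
  obtain ⟨hz1, hz2, hz3⟩ := hz
  have hT0 : (0:ℝ) ≤ T := hT.le
  have hTT : T ∈ Icc (0:ℝ) T := ⟨hT0, le_rfl⟩
  have h0T : (0:ℝ) ∈ Icc (0:ℝ) T := ⟨le_rfl, hT0⟩
  have hYc : ContinuousOn Y (Icc (0:ℝ) T) := fun t ht => (hY1 t ht).continuousWithinAt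
  have hY'c : ContinuousOn Y' (Icc (0:ℝ) T) := fun t ht => (hY2 t ht).continuousWithinAt
  -- nhdsWithin membership helper
  have hnhds : ∀ x : ℝ, 0 ≤ x → x < T → Icc (0:ℝ) T ∈ nhdsWithin x (Ioi x) := by
    intro x hx0 hxT
    refine mem_nhdsWithin.2 ⟨Iio T, isOpen_Iio, hxT, ?_⟩
    rintro y ⟨hy1, hy2⟩
    exact ⟨hx0.trans (le_of_lt hy2), le_of_lt hy1⟩
  -- first-order ODE
  have hODE : ∀ x ∈ Ioo (0:ℝ) T,
      Y'' x + b * Y' x = (starRingEnd ℂ) b * (Y' x + b * Y x) := by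
    intro x hx
    have h := hY4 x hx
    have hb1 : b - 2 * Complex.I * (b.im : ℂ) = (starRingEnd ℂ) b := by
      apply Complex.ext
      · simp
      · simp; ring
    have hb2 : (((‖b‖ : ℝ)) : ℂ) ^ 2 = (starRingEnd ℂ) b * b := by
      rw [← Complex.ofReal_pow, Complex.sq_norm]
      exact Complex.normSq_eq_conj_mul_self
    simp only [Lexpr] at h
    linear_combination -h + hb1 * Y' x + hb2 * Y x
  set d := (starRingEnd ℂ) b with hd
  set c := Y' 0 + b * Y 0 with hc
  set U : ℝ → ℂ := fun t => c * Complex.exp (d * t) with hU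
  have hUc : Continuous U := continuous_const.mul (continuous_cexp_mul d)
  -- the optimal control formula
  have huU : ∀ t ∈ Icc (0:ℝ) T, Y' t + b * Y t = U t := by
    intro t ht
    rcases eq_or_lt_of_le ht.1 with h0 | h0
    · rw [hU, ← h0]
      simp [hc]
    set v : ℝ → ℂ := fun s => (Y' s + b * Y s) * Complex.exp (-d * s) with hv
    have hvc : ContinuousOn v (Icc (0:ℝ) t) :=
      ((hY'c.add (continuousOn_const.mul hYc)).mul
        (continuous_cexp_mul (-d)).continuousOn).mono (Icc_subset_Icc le_rfl ht.2)
    have hvd : ∀ x ∈ Ioo (0:ℝ) t, HasDerivWithinAt v 0 (Ioi x) x := by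
      intro x hx
      have hxI : x ∈ Icc (0:ℝ) T := ⟨hx.1.le, hx.2.le.trans ht.2⟩
      have hxT : x < T := lt_of_lt_of_le hx.2 ht.2
      have h1 : HasDerivWithinAt (fun s => Y' s + b * Y s) (Y'' x + b * Y' x) (Ioi x) x :=
        ((hY2 x hxI).add ((hY1 x hxI).const_mul b)).mono_of_mem_nhdsWithin (hnhds x hx.1.le hxT)
      have h2 : HasDerivAt (fun s : ℝ => Complex.exp (-d * s))
          (-d * Complex.exp (-d * x)) x := hasDerivAt_cexp_mul (-d) x
      have h3 := h1.mul h2.hasDerivWithinAt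
      have h4 : (Y'' x + b * Y' x) * Complex.exp (-d * x)
          + (Y' x + b * Y x) * (-d * Complex.exp (-d * x)) = 0 := by
        rw [hODE x ⟨hx.1, hxT⟩]; ring
      rw [h4] at h3
      exact h3
    have hFTC := intervalIntegral.integral_eq_sub_of_hasDeriv_right_of_le ht.1 hvc hvd
      (intervalIntegrable_const (c := (0:ℂ)))
    have hv0 : v t = v 0 := by
      have h5 : v t - v 0 = (0:ℂ) := by simpa using hFTC.symm
      linear_combination h5
    have hv0' : v 0 = c := by simp [hv, hc]
    have hexp : Complex.exp (-d * (t:ℂ)) * Complex.exp (d * (t:ℂ)) = 1 := by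
      rw [← Complex.exp_add]
      have h6 : -d * (t:ℂ) + d * (t:ℂ) = 0 := by ring
      rw [h6, Complex.exp_zero]
    calc Y' t + b * Y t
        = ((Y' t + b * Y t) * Complex.exp (-d * (t:ℂ))) * Complex.exp (d * (t:ℂ)) := by
          rw [mul_assoc, hexp, mul_one]
      _ = v t * Complex.exp (d * (t:ℂ)) := by rw [hv]
      _ = c * Complex.exp (d * (t:ℂ)) := by rw [hv0, hv0']
      _ = U t := by rw [hU]
  -- trajectory difference
  set w : ℝ → ℂ := fun t => z t - Y t with hw
  set w' : ℝ → ℂ := fun t => z' t - Y' t with hw'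
  have hY'int : IntegrableOn Y' (Icc (0:ℝ) T) := hY'c.integrableOn_compact isCompact_Icc
  have hw'int : IntegrableOn w' (Icc (0:ℝ) T) := hz1.sub hY'int
  have hYprim : ∀ t ∈ Icc (0:ℝ) T, Y t = Y 0 + ∫ s in (0:ℝ)..t, Y' s := by
    intro t ht
    have hder : ∀ x ∈ Ioo (0:ℝ) t, HasDerivWithinAt Y (Y' x) (Ioi x) x := fun x hx =>
      (hY1 x ⟨hx.1.le, hx.2.le.trans ht.2⟩).mono_of_mem_nhdsWithin
        (hnhds x hx.1.le (lt_of_lt_of_le hx.2 ht.2))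
    have hint : IntervalIntegrable Y' volume 0 t :=
      (intervalIntegrable_iff_integrableOn_Icc_of_le ht.1).2
        (hY'int.mono_set (Icc_subset_Icc le_rfl ht.2))
    have h9 := intervalIntegral.integral_eq_sub_of_hasDeriv_right_of_le ht.1
      (hYc.mono (Icc_subset_Icc le_rfl ht.2)) hder hint
    rw [h9]; ring
  have hwprim : ∀ t ∈ Icc (0:ℝ) T, w t = ∫ s in (0:ℝ)..t, w' s := by
    intro t ht
    have hzi : IntervalIntegrable z' volume 0 t :=
      (intervalIntegrable_iff_integrableOn_Icc_of_le ht.1).2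
        (hz1.mono_set (Icc_subset_Icc le_rfl ht.2))
    have hyi : IntervalIntegrable Y' volume 0 t :=
      (intervalIntegrable_iff_integrableOn_Icc_of_le ht.1).2
        (hY'int.mono_set (Icc_subset_Icc le_rfl ht.2))
    have h1 := hz3 t ht
    have h2 := hYprim t ht
    have h3 : z 0 = Y 0 := by rw [hz0, hY5]
    simp only [hw, hw']
    rw [intervalIntegral.integral_sub hzi hyi, h1, h2, h3]
    ring
  have hwT : w T = 0 := by simp only [hw]; rw [hzT, hY6, sub_self]
  have hwc : ContinuousOn w (Icc (0:ℝ) T) :=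
    (primitive_continuousOn T w' hw'int).congr fun t ht => hwprim t ht
  set q : ℝ → ℂ := fun t => w' t + b * w t with hq
  have hw'm : AEStronglyMeasurable w' (volume.restrict (Icc (0:ℝ) T)) :=
    hw'int.aestronglyMeasurable
  have hwm : AEStronglyMeasurable w (volume.restrict (Icc (0:ℝ) T)) :=
    hwc.aestronglyMeasurable measurableSet_Icc
  have hqm : AEStronglyMeasurable q (volume.restrict (Icc (0:ℝ) T)) := by
    simp only [hq]; exact hw'm.add (hwm.const_mul b)
  have hw'2 : IntegrableOn (fun t => ‖w' t‖ ^ 2) (Icc (0:ℝ) T) := by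
    have hmaj : IntegrableOn (fun t => 2 * ‖z' t‖ ^ 2 + 2 * ‖Y' t‖ ^ 2) (Icc (0:ℝ) T) :=
      (hz2.const_mul 2).add
        ((((hY'c.norm).pow 2).integrableOn_compact isCompact_Icc).const_mul 2)
    refine Integrable.mono' hmaj ((continuous_pow 2).comp_aestronglyMeasurable hw'm.norm) ?_
    refine ae_of_all _ fun t => ?_
    have h1 : ‖z' t - Y' t‖ ≤ ‖z' t‖ + ‖Y' t‖ := norm_sub_le _ _
    have h2 : (0:ℝ) ≤ ‖z' t - Y' t‖ := norm_nonneg _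
    rw [Real.norm_eq_abs, abs_of_nonneg (by positivity)]
    simp only [hw']
    nlinarith [sq_nonneg (‖z' t‖ - ‖Y' t‖), norm_nonneg (z' t), norm_nonneg (Y' t)]
  have hq2 : IntegrableOn (fun t => ‖q t‖ ^ 2) (Icc (0:ℝ) T) := by
    have hmaj : IntegrableOn (fun t => 2 * ‖w' t‖ ^ 2 + 2 * (‖b‖ * ‖w t‖) ^ 2)
        (Icc (0:ℝ) T) :=
      (hw'2.const_mul 2).add
        (((continuousOn_const.mul ((continuousOn_const.mul hwc.norm).pow 2)).integrableOn_compact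
          isCompact_Icc))
    refine Integrable.mono' hmaj ((continuous_pow 2).comp_aestronglyMeasurable hqm.norm) ?_
    refine ae_of_all _ fun t => ?_
    have h1 : ‖q t‖ ≤ ‖w' t‖ + ‖b‖ * ‖w t‖ := by
      simp only [hq]
      calc ‖w' t + b * w t‖ ≤ ‖w' t‖ + ‖b * w t‖ := norm_add_le _ _
        _ = ‖w' t‖ + ‖b‖ * ‖w t‖ := by rw [norm_mul]
    have h2 : (0:ℝ) ≤ ‖q t‖ := norm_nonneg _
    rw [Real.norm_eq_abs, abs_of_nonneg (by positivity)]
    nlinarith [sq_nonneg (‖w' t‖ - ‖b‖ * ‖w t‖), norm_nonneg (w' t),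
      mul_nonneg (norm_nonneg b) (norm_nonneg (w t))]
  have hU2 : IntegrableOn (fun t => ‖U t‖ ^ 2) (Icc (0:ℝ) T) :=
    ((hUc.norm.pow 2).continuousOn).integrableOn_compact isCompact_Icc
  have hUconjc : Continuous fun t => (starRingEnd ℂ) (U t) := continuous_star.comp hUc
  have hcrossC : IntegrableOn (fun t => (starRingEnd ℂ) (U t) * q t) (Icc (0:ℝ) T) := by
    have hmaj : IntegrableOn (fun t => ‖U t‖ ^ 2 + ‖q t‖ ^ 2) (Icc (0:ℝ) T) := hU2.add hq2
    refine Integrable.mono' hmaj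
      ((hUconjc.aestronglyMeasurable.restrict).mul hqm) ?_
    refine ae_of_all _ fun t => ?_
    rw [norm_mul]
    have h1 : ‖(starRingEnd ℂ) (U t)‖ = ‖U t‖ := norm_star _
    rw [h1]
    nlinarith [sq_nonneg (‖U t‖ - ‖q t‖), norm_nonneg (U t), norm_nonneg (q t)]
  have hcrossRe : IntegrableOn (fun t => ((starRingEnd ℂ) (U t) * q t).re) (Icc (0:ℝ) T) :=
    Complex.reCLM.integrable_comp hcrossC
  have hExpCont : Continuous fun s : ℝ => b * Complex.exp (b * s) :=
    continuous_const.mul (continuous_cexp_mul b)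
  have hparts := parts_aux T hT0 (fun s : ℝ => Complex.exp (b * s))
    (fun s => b * Complex.exp (b * s)) w' (fun t => hasDerivAt_cexp_mul b t) hExpCont hw'int
  have hconjU : ∀ t : ℝ, (starRingEnd ℂ) (U t) = (starRingEnd ℂ) c * Complex.exp (b * t) := by
    intro t
    simp only [hU]
    rw [map_mul]
    congr 1
    rw [← Complex.exp_conj, map_mul, hd, Complex.conj_conj, Complex.conj_ofReal]
  have hcross0 : (∫ t in Icc (0:ℝ) T, (starRingEnd ℂ) (U t) * q t) = 0 := by
    calc (∫ t in Icc (0:ℝ) T, (starRingEnd ℂ) (U t) * q t)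
        = ∫ t in Icc (0:ℝ) T, (starRingEnd ℂ) c *
            (Complex.exp (b * t) * w' t
              + b * Complex.exp (b * t) * ∫ s in (0:ℝ)..t, w' s) := by
          refine setIntegral_congr_fun measurableSet_Icc fun t ht => ?_
          rw [hconjU t, ← hwprim t ht]
          simp only [hq]
          ring
      _ = (starRingEnd ℂ) c * ∫ t in Icc (0:ℝ) T,
            (Complex.exp (b * t) * w' t
              + b * Complex.exp (b * t) * ∫ s in (0:ℝ)..t, w' s) :=
          integral_const_mul _ _
      _ = (starRingEnd ℂ) c * (Complex.exp (b * T) * ∫ s in (0:ℝ)..T, w' s) :=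
          congrArg (fun x => (starRingEnd ℂ) c * x) hparts
      _ = 0 := by rw [← hwprim T hTT, hwT, mul_zero, mul_zero]
  have hpoint : ∀ t ∈ Icc (0:ℝ) T, ‖z' t + b * z t‖ ^ 2
      = (‖U t‖ ^ 2 + 2 * ((starRingEnd ℂ) (U t) * q t).re) + ‖q t‖ ^ 2 := by
    intro t ht
    have e : z' t + b * z t = U t + q t := by
      rw [← huU t ht]
      simp only [hq, hw, hw']
      ring
    rw [e, norm_add_sq_complex]
  have hsplit : (∫ t in Icc (0:ℝ) T, ‖z' t + b * z t‖ ^ 2)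
      = (∫ t in Icc (0:ℝ) T, ‖U t‖ ^ 2) + ∫ t in Icc (0:ℝ) T, ‖q t‖ ^ 2 := by
    have hcr2 : IntegrableOn (fun t => 2 * ((starRingEnd ℂ) (U t) * q t).re)
        (Icc (0:ℝ) T) := hcrossRe.const_mul 2
    have hsum1 : IntegrableOn
        (fun t => ‖U t‖ ^ 2 + 2 * ((starRingEnd ℂ) (U t) * q t).re) (Icc (0:ℝ) T) :=
      hU2.add hcr2
    rw [setIntegral_congr_fun measurableSet_Icc fun t ht => hpoint t ht]
    rw [integral_add hsum1 hq2]
    rw [integral_add hU2 hcr2]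
    have h7 : (∫ t in Icc (0:ℝ) T, 2 * ((starRingEnd ℂ) (U t) * q t).re) = 0 := by
      rw [integral_const_mul]
      have h8 : (∫ t in Icc (0:ℝ) T, ((starRingEnd ℂ) (U t) * q t).re)
          = (∫ t in Icc (0:ℝ) T, (starRingEnd ℂ) (U t) * q t).re := by
        simpa using Complex.reCLM.integral_comp_comm hcrossC
      rw [h8, hcross0]
      simp
    rw [h7, add_zero]
  have hYU : (∫ t in Icc (0:ℝ) T, ‖Y' t + b * Y t‖ ^ 2) = ∫ t in Icc (0:ℝ) T, ‖U t‖ ^ 2 :=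
    setIntegral_congr_fun measurableSet_Icc fun t ht => by rw [huU t ht]
  have hq2nn : (0:ℝ) ≤ ∫ t in Icc (0:ℝ) T, ‖q t‖ ^ 2 :=
    integral_nonneg fun t => by positivity
  refine ⟨by rw [hYU, hsplit]; linarith, ?_, ?_⟩
  · intro heq
    have hzero : (∫ t in Icc (0:ℝ) T, ‖q t‖ ^ 2) = 0 := by
      rw [hYU, hsplit] at heq; linarith
    have haeq : ∀ᵐ t ∂(volume.restrict (Icc (0:ℝ) T)), q t = 0 := by
      have h8 := (integral_eq_zero_iff_of_nonneg_ae
        (ae_of_all _ fun t => by positivity) hq2).1 hzero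
      filter_upwards [h8] with t ht
      have h9 : ‖q t‖ ^ 2 = 0 := ht
      have h10 : ‖q t‖ = 0 := by nlinarith [norm_nonneg (q t)]
      exact norm_eq_zero.mp h10
    intro t ht
    have hq0sub : ∀ᵐ s ∂(volume.restrict (Icc (0:ℝ) t)), q s = 0 :=
      ae_restrict_of_ae_restrict_of_subset (Icc_subset_Icc le_rfl ht.2) haeq
    have hparts2 := parts_aux t ht.1 (fun s : ℝ => Complex.exp (b * s))
      (fun s => b * Complex.exp (b * s)) w' (fun s => hasDerivAt_cexp_mul b s) hExpCont
      (hw'int.mono_set (Icc_subset_Icc le_rfl ht.2))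
    have hLHS0 : (∫ s in Icc (0:ℝ) t, ((fun s : ℝ => Complex.exp (b * s)) s * w' s
        + (fun s : ℝ => b * Complex.exp (b * s)) s * ∫ r in (0:ℝ)..s, w' r)) = 0 := by
      refine integral_eq_zero_of_ae ?_
      filter_upwards [hq0sub, ae_restrict_mem measurableSet_Icc] with s hs1 hs2
      have hsIcc : s ∈ Icc (0:ℝ) T := ⟨hs2.1, hs2.2.trans ht.2⟩
      have h11 : w' s + b * w s = 0 := hs1
      show Complex.exp (b * s) * w' s + b * Complex.exp (b * s) * (∫ r in (0:ℝ)..s, w' r) = 0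
      rw [← hwprim s hsIcc]
      linear_combination Complex.exp (b * (s:ℝ)) * h11
    have hwt0 : w t = 0 := by
      have h10 : Complex.exp (b * (t:ℝ)) * w t = 0 := by
        rw [hwprim t ht, ← hparts2]
        exact hLHS0
      exact (mul_eq_zero.mp h10).resolve_left (Complex.exp_ne_zero _)
    have h12 : z t - Y t = 0 := hwt0
    exact sub_eq_zero.mp h12
  · intro hzy
    have hw0' : ∀ t ∈ Icc (0:ℝ) T, w t = 0 := fun t ht => by
      simp only [hw]; rw [hzy t ht, sub_self]
    have hprim0 : ∀ t ∈ Icc (0:ℝ) T, (∫ s in (0:ℝ)..t, w' s) = 0 := fun t ht => by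
      rw [← hwprim t ht]; exact hw0' t ht
    have haew' := ae_zero_of_prim_zero T hT0 w' hw'int hprim0
    have hzero : (∫ t in Icc (0:ℝ) T, ‖q t‖ ^ 2) = 0 := by
      refine integral_eq_zero_of_ae ?_
      filter_upwards [haew', ae_restrict_mem measurableSet_Icc] with t h1 h2
      have h3 : q t = 0 := by
        simp only [hq]; rw [h1, hw0' t h2, mul_zero, add_zero]
      rw [h3]
      simp
    rw [hYU, hsplit, hzero, add_zero]
end
end

section
/- Let b ∈ ℂ and let y : [0,1] → ℂ be absolutely continuous with y' ∈ L²(0,1) and y(0) = 0. Then ∫₀¹ |y(t)|² dt ≤ e^{2|b|} ∫₀¹ |y'(t) + b y(t)|² dt. -/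
open MeasureTheory Set

noncomputable section

/-- Poincaré-type estimate for the expression `ℓy = y' + by`:
if `y` is absolutely continuous on `[0,1]` with `y' ∈ L²(0,1)` and `y(0) = 0`, then
`∫₀¹ |y|² ≤ e^{2|b|} ∫₀¹ |y' + by|²`. -/
theorem poincare_type_estimate (b : ℂ) (y y' : ℝ → ℂ)
    (hy : IsW1On 1 y y') (h0 : y 0 = 0) :
    ∫ t in Icc (0:ℝ) 1, ‖y t‖ ^ 2 ≤
      Real.exp (2 * ‖b‖) * ∫ t in Icc (0:ℝ) 1, ‖y' t + b * y t‖ ^ 2 := by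
  obtain ⟨hy'int, hy'2int, hrep⟩ := hy
  set g : ℝ → ℂ := fun t => y' t + b * y t with hgdef
  -- the continuous primitive of `y'`, clamped to `[0,1]`
  set P : ℝ → ℂ := fun u => ∫ s in (0:ℝ)..u, y' s with hPdef
  have hPcont : ContinuousOn P (Icc (0:ℝ) 1) := by
    have := intervalIntegral.continuousOn_primitive_interval (a := (0:ℝ)) (b := 1)
      (μ := volume) (f := y')
    rw [uIcc_of_le (by norm_num : (0:ℝ) ≤ 1)] at this
    exact this hy'int
  set c : ℝ → ℝ := fun t => max 0 (min t 1) with hcdef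
  have hcmem : ∀ t, c t ∈ Icc (0:ℝ) 1 :=
    fun t => ⟨le_max_left _ _, max_le (by norm_num) (min_le_right _ _)⟩
  have hccont : Continuous c := (continuous_const.max (continuous_id.min continuous_const))
  set f : ℝ → ℂ := fun t => P (c t) with hfdef
  have hfcont : Continuous f := hPcont.comp_continuous hccont hcmem
  have hceq : ∀ t ∈ Icc (0:ℝ) 1, c t = t := fun t ht => by
    simp [hcdef, min_eq_left ht.2, max_eq_right ht.1]
  have hfy : ∀ t ∈ Icc (0:ℝ) 1, f t = y t := fun t ht => by
    rw [hrep t ht, h0]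
    simp [hfdef, hceq t ht, hPdef]
  have hnfc : Continuous fun s => ‖f s‖ := hfcont.norm
  set Y : ℝ → ℝ := fun t => ∫ s in (0:ℝ)..t, ‖f s‖ with hYdef
  have hYderiv : ∀ t, HasDerivAt Y (‖f t‖) t := fun t =>
    intervalIntegral.integral_hasDerivAt_right (hnfc.intervalIntegrable 0 t)
      (hnfc.stronglyMeasurableAtFilter _ _) hnfc.continuousAt
  have hYcont : Continuous Y := by
    rw [continuous_iff_continuousAt]; exact fun t => (hYderiv t).continuousAt
  -- integrabilities
  have hyint : IntegrableOn y (Icc (0:ℝ) 1) :=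
    (hfcont.integrableOn_Icc).congr_fun (fun t ht => hfy t ht) measurableSet_Icc
  have hgint : IntegrableOn g (Icc (0:ℝ) 1) := hy'int.add (hyint.const_mul b)
  have hgnint : IntegrableOn (fun t => ‖g t‖) (Icc (0:ℝ) 1) := hgint.norm
  set H : ℝ := ∫ t in Icc (0:ℝ) 1, ‖g t‖ with hHdef
  have hH0 : 0 ≤ H := setIntegral_nonneg measurableSet_Icc (fun t _ => norm_nonneg _)
  -- key pointwise integral inequality
  have key : ∀ t ∈ Icc (0:ℝ) 1, ‖f t‖ ≤ H + ‖b‖ * Y t := by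
    intro t ht
    have ht0 : (0:ℝ) ≤ t := ht.1
    have hsub : Ioc (0:ℝ) t ⊆ Icc (0:ℝ) 1 := fun s hs => ⟨hs.1.le, hs.2.trans ht.2⟩
    have hyi : IntegrableOn y (Ioc (0:ℝ) t) := hyint.mono_set hsub
    have hgi : IntegrableOn g (Ioc (0:ℝ) t) := hgint.mono_set hsub
    have hft : f t = ∫ s in Ioc (0:ℝ) t, y' s := by
      simp only [hfdef, hceq t ht, hPdef]
      rw [intervalIntegral.integral_of_le ht0]
    have hsplit : ∫ s in Ioc (0:ℝ) t, y' s
        = (∫ s in Ioc (0:ℝ) t, g s) - b * ∫ s in Ioc (0:ℝ) t, y s := by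
      rw [← integral_const_mul, ← integral_sub hgi (hyi.const_mul b)]
      apply integral_congr_ae
      filter_upwards with s
      simp [hgdef]
    rw [hft, hsplit]
    have h1 : ‖(∫ s in Ioc (0:ℝ) t, g s) - b * ∫ s in Ioc (0:ℝ) t, y s‖
        ≤ ‖∫ s in Ioc (0:ℝ) t, g s‖ + ‖b‖ * ‖∫ s in Ioc (0:ℝ) t, y s‖ := by
      refine (norm_sub_le _ _).trans ?_
      rw [norm_mul]
    have h2 : ‖∫ s in Ioc (0:ℝ) t, g s‖ ≤ H := by
      refine (norm_integral_le_integral_norm _).trans ?_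
      exact setIntegral_mono_set hgnint
        (ae_of_all _ fun s => norm_nonneg _) (HasSubset.Subset.eventuallyLE hsub)
    have h3 : ‖∫ s in Ioc (0:ℝ) t, y s‖ ≤ Y t := by
      refine (norm_integral_le_integral_norm _).trans ?_
      have heq : ∫ s in Ioc (0:ℝ) t, ‖y s‖ = ∫ s in Ioc (0:ℝ) t, ‖f s‖ := by
        apply setIntegral_congr_fun measurableSet_Ioc
        intro s hs
        simp only [hfy s (hsub hs)]
      have hYt : Y t = ∫ s in Ioc (0:ℝ) t, ‖f s‖ := intervalIntegral.integral_of_le ht0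
      rw [heq, ← hYt]
    have h4 : ‖b‖ * ‖∫ s in Ioc (0:ℝ) t, y s‖ ≤ ‖b‖ * Y t :=
      mul_le_mul_of_nonneg_left h3 (norm_nonneg b)
    refine h1.trans ?_
    linarith
  -- Grönwall
  have hY0 : Y 0 = 0 := by simp [hYdef]
  have hYnn : ∀ t ∈ Icc (0:ℝ) 1, 0 ≤ Y t := fun t ht =>
    intervalIntegral.integral_nonneg ht.1 (fun s _ => norm_nonneg _)
  have hgron : ∀ t ∈ Icc (0:ℝ) 1, ‖Y t‖ ≤ gronwallBound 0 ‖b‖ H (t - 0) := by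
    apply norm_le_gronwallBound_of_norm_deriv_right_le hYcont.continuousOn
      (fun t _ => (hYderiv t).hasDerivWithinAt)
    · rw [hY0]; simp
    · intro t ht
      have htIcc : t ∈ Icc (0:ℝ) 1 := ⟨ht.1, ht.2.le⟩
      rw [norm_norm, Real.norm_of_nonneg (hYnn t htIcc)]
      have := key t htIcc
      linarith
  -- pointwise bound ‖y t‖ ≤ H * exp ‖b‖
  have hpt : ∀ t ∈ Icc (0:ℝ) 1, ‖y t‖ ≤ H * Real.exp ‖b‖ := by
    intro t ht
    have h2 : Y t ≤ gronwallBound 0 ‖b‖ H (t - 0) := by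
      have := hgron t ht; rwa [Real.norm_of_nonneg (hYnn t ht)] at this
    rw [← hfy t ht]
    have h1 := key t ht
    rcases eq_or_ne ‖b‖ 0 with hb | hb
    · rw [hb, Real.exp_zero, mul_one]
      rw [hb, zero_mul, add_zero] at h1
      exact h1
    · have hbpos : 0 < ‖b‖ := lt_of_le_of_ne (norm_nonneg b) (Ne.symm hb)
      rw [gronwallBound_of_K_ne_0 hb, sub_zero] at h2
      have h5 : ‖b‖ * Y t ≤ H * (Real.exp (‖b‖ * t) - 1) := by
        calc ‖b‖ * Y t
            ≤ ‖b‖ * (0 * Real.exp (‖b‖ * t) + H / ‖b‖ * (Real.exp (‖b‖ * t) - 1)) :=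
              mul_le_mul_of_nonneg_left h2 hbpos.le
          _ = H / ‖b‖ * ‖b‖ * (Real.exp (‖b‖ * t) - 1) := by ring
          _ = H * (Real.exp (‖b‖ * t) - 1) := by rw [div_mul_cancel₀ H hb]
      have he : Real.exp (‖b‖ * t) ≤ Real.exp ‖b‖ := by
        apply Real.exp_le_exp.mpr
        nlinarith [ht.2, hbpos]
      have h8 : H * Real.exp (‖b‖ * t) ≤ H * Real.exp ‖b‖ :=
        mul_le_mul_of_nonneg_left he hH0
      nlinarith
  -- integrability of squares
  have hby2int : IntegrableOn (fun t => ‖b * y t‖ ^ 2) (Icc (0:ℝ) 1) := by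
    have : Continuous fun t => ‖b * f t‖ ^ 2 := ((continuous_const.mul hfcont).norm.pow 2)
    exact this.integrableOn_Icc.congr_fun (fun t ht => by simp only [hfy t ht]) measurableSet_Icc
  have hg2int : IntegrableOn (fun t => ‖g t‖ ^ 2) (Icc (0:ℝ) 1) := by
    have hbound : IntegrableOn (fun t => 2 * ‖y' t‖ ^ 2 + 2 * ‖b * y t‖ ^ 2) (Icc (0:ℝ) 1) :=
      (hy'2int.const_mul 2).add (hby2int.const_mul 2)
    refine Integrable.mono' hbound
      (hgint.aestronglyMeasurable.norm.aemeasurable.pow_const 2).aestronglyMeasurable ?_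
    filter_upwards with t
    have h := norm_add_le (y' t) (b * y t)
    rw [Real.norm_of_nonneg (by positivity : (0:ℝ) ≤ ‖g t‖ ^ 2)]
    have : ‖g t‖ ≤ ‖y' t‖ + ‖b * y t‖ := h
    nlinarith [norm_nonneg (g t), norm_nonneg (y' t), norm_nonneg (b * y t),
      sq_nonneg (‖y' t‖ - ‖b * y t‖), mul_self_le_mul_self (norm_nonneg (g t)) this]
  -- Jensen / Cauchy–Schwarz : H ^ 2 ≤ ∫ ‖g‖ ^ 2
  have hvol : volume.real (Icc (0:ℝ) 1) = 1 := by
    simp [Real.volume_real_Icc]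
  have hjensen : H ^ 2 ≤ ∫ t in Icc (0:ℝ) 1, ‖g t‖ ^ 2 := by
    have h0le : 0 ≤ ∫ t in Icc (0:ℝ) 1, (‖g t‖ - H) ^ 2 :=
      setIntegral_nonneg measurableSet_Icc fun t _ => sq_nonneg _
    have hexp : ∫ t in Icc (0:ℝ) 1, (‖g t‖ - H) ^ 2
        = (∫ t in Icc (0:ℝ) 1, ‖g t‖ ^ 2) - 2 * H * H + H ^ 2 := by
      have hcongr : ∫ t in Icc (0:ℝ) 1, (‖g t‖ - H) ^ 2
          = ∫ t in Icc (0:ℝ) 1, (‖g t‖ ^ 2 - 2 * H * ‖g t‖ + H ^ 2) := by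
        apply integral_congr_ae
        filter_upwards with t
        ring
      have i1 : IntegrableOn (fun t => ‖g t‖ ^ 2 - 2 * H * ‖g t‖) (Icc (0:ℝ) 1) :=
        hg2int.sub (hgnint.const_mul (2 * H))
      have i2 : IntegrableOn (fun _t : ℝ => H ^ 2) (Icc (0:ℝ) 1) :=
        integrableOn_const (by simp [Real.volume_Icc])
      rw [hcongr, integral_add i1 i2, integral_sub hg2int (hgnint.const_mul (2 * H)),
        integral_const_mul, setIntegral_const, hvol, one_smul, ← hHdef]
    nlinarith
  -- final integration
  have hy2int : IntegrableOn (fun t => ‖y t‖ ^ 2) (Icc (0:ℝ) 1) :=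
    ((hfcont.norm.pow 2).integrableOn_Icc).congr_fun
      (fun t ht => by simp only [Pi.pow_apply, hfy t ht]) measurableSet_Icc
  have hmono : ∫ t in Icc (0:ℝ) 1, ‖y t‖ ^ 2
      ≤ ∫ _t in Icc (0:ℝ) 1, (H * Real.exp ‖b‖) ^ 2 := by
    apply setIntegral_mono_on hy2int
      (integrableOn_const (by simp [Real.volume_Icc])) measurableSet_Icc
    intro t ht
    exact pow_le_pow_left₀ (norm_nonneg _) (hpt t ht) 2
  have hconst : ∫ _t in Icc (0:ℝ) 1, (H * Real.exp ‖b‖) ^ 2 = (H * Real.exp ‖b‖) ^ 2 := by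
    rw [setIntegral_const, hvol, one_smul]
  have hsq : (H * Real.exp ‖b‖) ^ 2 = Real.exp (2 * ‖b‖) * H ^ 2 := by
    rw [mul_pow, pow_two (Real.exp ‖b‖), ← Real.exp_add, two_mul]
    ring
  calc ∫ t in Icc (0:ℝ) 1, ‖y t‖ ^ 2
      ≤ (H * Real.exp ‖b‖) ^ 2 := by rw [← hconst]; exact hmono
    _ = Real.exp (2 * ‖b‖) * H ^ 2 := hsq
    _ ≤ Real.exp (2 * ‖b‖) * ∫ t in Icc (0:ℝ) 1, ‖g t‖ ^ 2 := by
        exact mul_le_mul_of_nonneg_left hjensen (Real.exp_nonneg _)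
    _ = Real.exp (2 * ‖b‖) * ∫ t in Icc (0:ℝ) 1, ‖y' t + b * y t‖ ^ 2 := rfl
end
end

section
/- Let y ∈ W²_{2,α} be a solution of the boundary value problem ℬ on the tree 𝒯 (with data φ₀, φ₁), and let z = [z_j] ∈ W¹_{2,α} satisfy the matching conditions z_{k_j}(1) = z_j(0) for all j ≥ 2, together with z₁(0) = 0 and z_j(1) = 0 for all j ∈ ℕ₂. Then the first variation of the energy functional vanishes: Σ_{j=1}^∞ α_j ∫₀¹ (y_j'(t) + b_j y_j(t)) · conj(z_j'(t) + b_j z_j(t)) dt = 0. -/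
open MeasureTheory Set

noncomputable section

/-- Encoding of the infinite rooted temporal tree `𝒯` together with the probabilistic data
`θ_l`, `p_l`, the edge coefficients `b_j`, the edge probabilities `p̃_j` and the
weights `α_j`.  Edges are indexed by `j ∈ ℕ`, `j ≥ 1` (the index `0` is unused);
`ℕ₁` is the set of odd indices (internal vertices) and `ℕ₂` the set of even
indices `≥ 2` (boundary vertices other than the root). -/
structure TreeSetup where
  /-- the time horizon -/
  T : ℕ
  hT : 2 ≤ T
  /-- `k j` is the index of the initial vertex of the edge `e_j` -/
  k : ℕ → ℕ
  /-- `nu j = ν_j`, so that the `ν_j`-th iterate of `k` maps `j` to `1` -/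
  nu : ℕ → ℕ
  /-- `enum j l = ν_{j,l}`, the enumeration of `V_j = {ν : k ν = j}` for odd `j` -/
  enum : ℕ → ℕ → ℕ
  /-- the possible values of the random coefficient -/
  θ : ℕ → ℂ
  /-- the probabilities `p_l` -/
  p : ℕ → ℝ
  /-- the edge coefficients `b_j` -/
  b : ℕ → ℂ
  /-- the edge probabilities `p̃_j` -/
  ptil : ℕ → ℝ
  /-- the weights `α_j` -/
  α : ℕ → ℝ
  hk1 : k 1 = 0
  hk_eq_zero : ∀ j, 1 ≤ j → k j = 0 → j = 1
  hk_odd : ∀ j, 2 ≤ j → Odd (k j)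
  henum_ge : ∀ j l, Odd j → 2 ≤ enum j l
  henum_k : ∀ j l, Odd j → k (enum j l) = j
  henum_inj : ∀ j, Odd j → Function.Injective (enum j)
  henum_surj : ∀ j m, Odd j → 2 ≤ m → k m = j → ∃ l, enum j l = m
  htree : ∀ j, 1 ≤ j → k^[nu j] j = 1
  hnu1 : nu 1 = 0
  hnu_rec : ∀ j, 2 ≤ j → nu j = nu (k j) + 1
  hdepth_boundary : ∀ j, 2 ≤ j → Even j → nu j + 1 = T
  hdepth_internal : ∀ j, Odd j → nu j + 1 < T
  hθ_bdd : ∃ M : ℝ, ∀ l, ‖θ l‖ ≤ M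
  hp_pos : ∀ l, 0 < p l
  hp_sum : HasSum p 1
  hb_enum : ∀ j l, Odd j → b (enum j l) = θ l
  hptil_enum : ∀ j l, Odd j → ptil (enum j l) = p l
  hα0 : α 0 = 0
  hα1 : α 1 = 1
  hα_rec : ∀ j, 2 ≤ j → α j = ptil j * α (k j)

/-- `f ∈ W₂¹[0,1]` with derivative `f'`: `f'` is integrable with square-integrable
norm on `[0,1]` and `f` is the indefinite integral of `f'` (so `f` is absolutely
continuous on `[0,1]`). -/
def IsW1 (f f' : ℝ → ℂ) : Prop :=
  IntegrableOn f' (Icc (0:ℝ) 1) ∧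
  IntegrableOn (fun t => ‖f' t‖ ^ 2) (Icc (0:ℝ) 1) ∧
  ∀ t ∈ Icc (0:ℝ) 1, f t = f 0 + ∫ s in (0:ℝ)..t, f' s

/-- `f ∈ W₂²[0,1]` with first derivative `f'` and second derivative `f''`. -/
def IsW2 (f f' f'' : ℝ → ℂ) : Prop := IsW1 f f' ∧ IsW1 f' f''

/-- The squared `L²(0,1)` norm. -/
def sqL2 (f : ℝ → ℂ) : ℝ := ∫ t in Icc (0:ℝ) 1, ‖f t‖ ^ 2

/-- Membership in `L_{2,α} = W⁰_{2,α}`. -/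
def MemL2α (S : TreeSetup) (u : ℕ → ℝ → ℂ) : Prop :=
  (∀ j, 1 ≤ j → IntegrableOn (u j) (Icc (0:ℝ) 1) ∧
      IntegrableOn (fun t => ‖u j t‖ ^ 2) (Icc (0:ℝ) 1)) ∧
  Summable (fun j => S.α j * sqL2 (u j))

/-- Membership in `W¹_{2,α}` (the tuple of derivatives is `y'`). -/
def MemW1α (S : TreeSetup) (y y' : ℕ → ℝ → ℂ) : Prop :=
  (∀ j, 1 ≤ j → IsW1 (y j) (y' j)) ∧
  Summable (fun j => S.α j * (sqL2 (y j) + sqL2 (y' j)))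

/-- Membership in `W²_{2,α}`. -/
def MemW2α (S : TreeSetup) (y y' y'' : ℕ → ℝ → ℂ) : Prop :=
  (∀ j, 1 ≤ j → IsW2 (y j) (y' j) (y'' j)) ∧
  Summable (fun j => S.α j * (sqL2 (y j) + sqL2 (y' j) + sqL2 (y'' j)))

/-- The boundary value problem `ℬ` on the tree `𝒯`: equations `ℒ_j y = 0` on `(0,1)`,
initial condition (9), matching conditions (10), final conditions (11), and the
Kirchhoff-type conditions (14). -/
def SatisfiesBVP (S : TreeSetup) (φ0 φ1 : ℂ) (y y' y'' : ℕ → ℝ → ℂ) : Prop :=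
  MemW2α S y y' y'' ∧
  (∀ j, 1 ≤ j → ∀ᵐ t ∂(volume.restrict (Ioo (0:ℝ) 1)),
      Lexpr (S.b j) (y j) (y' j) (y'' j) t = 0) ∧
  y 1 0 = φ0 ∧
  (∀ j, 2 ≤ j → y (S.k j) 1 = y j 0) ∧
  (∀ j, 2 ≤ j → Even j → y j 1 = φ1) ∧
  (∀ j, Odd j →
    y' j 1 + (S.b j - ∑' l, (S.p l : ℂ) * S.b (S.enum j l)) * y j 1
      = ∑' l, (S.p l : ℂ) * y' (S.enum j l) 0)

/-- Admissible tuples for the variational problem `𝒱`: members of `W¹_{2,α}`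
satisfying (9), (10) and (11). -/
def Admissible (S : TreeSetup) (φ0 φ1 : ℂ) (y y' : ℕ → ℝ → ℂ) : Prop :=
  MemW1α S y y' ∧ y 1 0 = φ0 ∧
  (∀ j, 2 ≤ j → y (S.k j) 1 = y j 0) ∧
  (∀ j, 2 ≤ j → Even j → y j 1 = φ1)

/-- The energy functional `J(y) = Σ_j α_j ∫₀¹ |y_j' + b_j y_j|² dt`. -/
def energy (S : TreeSetup) (y y' : ℕ → ℝ → ℂ) : ℝ :=
  ∑' j, S.α j * sqL2 (fun t => y' j t + S.b j * y j t)



lemma volume_I : volume (Icc (0:ℝ) 1) = 1 := by simp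

lemma sq_setIntegral_le {h : ℝ → ℝ}
    (h1 : IntegrableOn h (Icc (0:ℝ) 1))
    (h2 : IntegrableOn (fun t => h t ^ 2) (Icc (0:ℝ) 1)) :
    (∫ t in Icc (0:ℝ) 1, h t) ^ 2 ≤ ∫ t in Icc (0:ℝ) 1, h t ^ 2 := by
  set c := ∫ t in Icc (0:ℝ) 1, h t with hc
  have key : 0 ≤ ∫ t in Icc (0:ℝ) 1, (h t - c) ^ 2 :=
    setIntegral_nonneg measurableSet_Icc (fun t _ => sq_nonneg _)
  have expand : ∫ t in Icc (0:ℝ) 1, (h t - c) ^ 2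
      = (∫ t in Icc (0:ℝ) 1, h t ^ 2) - 2 * c * c + c ^ 2 := by
    have e1 : ∀ t, (h t - c) ^ 2 = h t ^ 2 - (2*c) * h t + c ^ 2 := by intro t; ring
    simp_rw [e1]
    rw [integral_add, integral_sub h2 (h1.const_mul _)]
    · rw [integral_const_mul, setIntegral_const]
      simp [volume_I, hc]
    · exact h2.sub (h1.const_mul _)
    · exact integrableOn_const (by simp [volume_I])
  nlinarith [key, expand]

lemma intervalIntegral_conj {f : ℝ → ℂ} {a b : ℝ} :
    ∫ t in a..b, (starRingEnd ℂ) (f t) = (starRingEnd ℂ) (∫ t in a..b, f t) := by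
  simp [intervalIntegral, integral_conj]

lemma interval_eq_Icc {f : ℝ → ℂ} {t : ℝ} (ht : 0 ≤ t) :
    ∫ s in (0:ℝ)..t, f s = ∫ s in Icc (0:ℝ) t, f s := by
  rw [intervalIntegral.integral_of_le ht, integral_Icc_eq_integral_Ioc]

lemma parts {F G f g : ℝ → ℂ}
    (hf : IntegrableOn f (Icc (0:ℝ) 1)) (hg : IntegrableOn g (Icc (0:ℝ) 1))
    (hF : ∀ t ∈ Icc (0:ℝ) 1, F t = F 0 + ∫ s in (0:ℝ)..t, f s)
    (hG : ∀ t ∈ Icc (0:ℝ) 1, G t = G 0 + ∫ s in (0:ℝ)..t, g s) :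
    ∫ t in Icc (0:ℝ) 1, (F t * g t + f t * G t) = F 1 * G 1 - F 0 * G 0 := by
  set I : Set ℝ := Icc (0:ℝ) 1 with hI
  set μ : Measure ℝ := volume.restrict I with hμ
  -- primitives
  set Φ : ℝ → ℂ := fun t => ∫ s in (0:ℝ)..t, f s with hΦ
  set Ψ : ℝ → ℂ := fun t => ∫ s in (0:ℝ)..t, g s with hΨ
  have hΦc : ContinuousOn Φ I := by
    have := intervalIntegral.continuousOn_primitive_interval
      (a := (0:ℝ)) (b := (1:ℝ)) (μ := volume) (f := f) (by simpa using hf)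
    simpa using this
  have hΨc : ContinuousOn Ψ I := by
    have := intervalIntegral.continuousOn_primitive_interval
      (a := (0:ℝ)) (b := (1:ℝ)) (μ := volume) (f := g) (by simpa using hg)
    simpa using this
  -- product integrability
  have HInt : Integrable (fun q : ℝ × ℝ => f q.1 * g q.2) (μ.prod μ) :=
    Integrable.mul_prod hf hg
  have hD : MeasurableSet {q : ℝ × ℝ | q.1 ≤ q.2} :=
    measurableSet_le measurable_fst measurable_snd
  have hD' : MeasurableSet {q : ℝ × ℝ | q.2 ≤ q.1} :=
    measurableSet_le measurable_snd measurable_fst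
  set P : ℝ × ℝ → ℂ := ({q : ℝ × ℝ | q.1 ≤ q.2}).indicator (fun q => f q.1 * g q.2) with hP
  set Q : ℝ × ℝ → ℂ := ({q : ℝ × ℝ | q.2 ≤ q.1}).indicator (fun q => f q.1 * g q.2) with hQ
  have hPint : Integrable P (μ.prod μ) := HInt.indicator hD
  have hQint : Integrable Q (μ.prod μ) := HInt.indicator hD'
  -- diagonal is null
  have hdiag : (μ.prod μ) {q : ℝ × ℝ | q.1 = q.2} = 0 := by
    have hms : MeasurableSet {q : ℝ × ℝ | q.1 = q.2} :=
      measurableSet_eq_fun measurable_fst measurable_snd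
    rw [Measure.prod_apply hms]
    have : ∀ x : ℝ, μ (Prod.mk x ⁻¹' {q : ℝ × ℝ | q.1 = q.2}) = 0 := by
      intro x
      have : (Prod.mk x ⁻¹' {q : ℝ × ℝ | q.1 = q.2}) = {x} := by
        ext y; simp [eq_comm]
      rw [this]
      exact le_antisymm (le_trans (Measure.restrict_le_self _) (by simp)) zero_le
    simp [this]
  -- P + Q = full + diagonal part; diagonal integral vanishes
  have hsum : ∫ q, P q ∂(μ.prod μ) + ∫ q, Q q ∂(μ.prod μ)
      = (∫ t in I, f t) * (∫ t in I, g t) := by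
    have hpoint : ∀ q : ℝ × ℝ, P q + Q q
        = f q.1 * g q.2 + ({q : ℝ × ℝ | q.1 = q.2}).indicator (fun q => f q.1 * g q.2) q := by
      intro q
      rcases lt_trichotomy q.1 q.2 with h | h | h
      · simp [hP, hQ, indicator_apply, le_of_lt h, not_le.2 h, h.ne]
      · simp [hP, hQ, indicator_apply, le_of_eq h, le_of_eq h.symm, h]
      · simp [hP, hQ, indicator_apply, le_of_lt h, not_le.2 h, h.ne']
    have hdint : ∫ q, ({q : ℝ × ℝ | q.1 = q.2}).indicator (fun q => f q.1 * g q.2) q ∂(μ.prod μ) = 0 := by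
      rw [integral_indicator (measurableSet_eq_fun measurable_fst measurable_snd)]
      exact setIntegral_measure_zero _ hdiag
    rw [← integral_add hPint hQint]
    simp_rw [hpoint]
    rw [integral_add HInt (HInt.indicator (measurableSet_eq_fun measurable_fst measurable_snd)),
      hdint, add_zero, integral_prod_mul]
  -- identify ∫ P with ∫ Φ·g
  have hPid : ∫ q, P q ∂(μ.prod μ) = ∫ t in I, Φ t * g t := by
    rw [integral_prod_symm _ hPint]
    refine integral_congr_ae ?_
    filter_upwards [ae_restrict_mem measurableSet_Icc] with t ht
    have hslice : (fun s => P (s, t)) = fun s => (Iic t).indicator (fun s' => f s' * g t) s := by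
      funext s
      by_cases h : s ≤ t <;> simp [hP, indicator_apply, h]
    rw [hslice, integral_indicator measurableSet_Iic, hμ, Measure.restrict_restrict measurableSet_Iic]
    have : Iic t ∩ I = Icc 0 t := by
      ext s; simp only [hI, mem_inter_iff, mem_Iic, mem_Icc]
      constructor
      · rintro ⟨h1, h2, h3⟩; exact ⟨h2, h1⟩
      · rintro ⟨h1, h2⟩; exact ⟨h2, h1, le_trans h2 ht.2⟩
    rw [this, integral_mul_const]
    congr 1
    exact (interval_eq_Icc ht.1).symm
  -- identify ∫ Q with ∫ f·Ψ
  have hQid : ∫ q, Q q ∂(μ.prod μ) = ∫ t in I, f t * Ψ t := by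
    rw [integral_prod _ hQint]
    refine integral_congr_ae ?_
    filter_upwards [ae_restrict_mem measurableSet_Icc] with s hs
    have hslice : (fun t => Q (s, t)) = fun t => (Iic s).indicator (fun t' => f s * g t') t := by
      funext t
      by_cases h : t ≤ s <;> simp [hQ, indicator_apply, h]
    rw [hslice, integral_indicator measurableSet_Iic, hμ, Measure.restrict_restrict measurableSet_Iic]
    have : Iic s ∩ I = Icc 0 s := by
      ext u; simp only [hI, mem_inter_iff, mem_Iic, mem_Icc]
      constructor
      · rintro ⟨h1, h2, h3⟩; exact ⟨h2, h1⟩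
      · rintro ⟨h1, h2⟩; exact ⟨h2, h1, le_trans h2 hs.2⟩
    rw [this, integral_const_mul]
    congr 1
    exact (interval_eq_Icc hs.1).symm
  -- split the main integral
  have hΦm : AEStronglyMeasurable Φ μ := hΦc.aestronglyMeasurable measurableSet_Icc
  have hΨm : AEStronglyMeasurable Ψ μ := hΨc.aestronglyMeasurable measurableSet_Icc
  obtain ⟨CΦ, hCΦ⟩ := isCompact_Icc.exists_bound_of_continuousOn hΦc
  obtain ⟨CΨ, hCΨ⟩ := isCompact_Icc.exists_bound_of_continuousOn hΨc
  have hΦg : Integrable (fun t => Φ t * g t) μ := by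
    refine Integrable.bdd_mul (c := CΦ) hg hΦm ?_
    filter_upwards [ae_restrict_mem measurableSet_Icc] with t ht
    exact hCΦ t ht
  have hfΨ : Integrable (fun t => f t * Ψ t) μ := by
    have : Integrable (fun t => Ψ t * f t) μ := by
      refine Integrable.bdd_mul (c := CΨ) hf hΨm ?_
      filter_upwards [ae_restrict_mem measurableSet_Icc] with t ht
      exact hCΨ t ht
    simpa [mul_comm] using this
  have hsplit : ∫ t in I, (F t * g t + f t * G t)
      = F 0 * (∫ t in I, g t) + (∫ t in I, Φ t * g t)
        + ((∫ t in I, f t) * G 0 + (∫ t in I, f t * Ψ t)) := by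
    have : ∫ t in I, (F t * g t + f t * G t)
        = ∫ t in I, ((F 0 * g t + Φ t * g t) + (f t * G 0 + f t * Ψ t)) := by
      refine setIntegral_congr_fun measurableSet_Icc ?_
      intro t ht
      simp only
      rw [hF t ht, hG t ht]
      ring
    have i1 : Integrable (fun t => F 0 * g t) μ := hg.const_mul _
    have i4 : Integrable (fun t => f t * G 0) μ := hf.mul_const _
    have i2 : Integrable (fun t => F 0 * g t + Φ t * g t) μ := i1.add hΦg
    have i5 : Integrable (fun t => f t * G 0 + f t * Ψ t) μ := i4.add hfΨ
    rw [this, integral_add i2 i5, integral_add i1 hΦg,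
      integral_add i4 hfΨ, integral_const_mul, integral_mul_const]
  have hF1 : F 1 = F 0 + ∫ t in I, f t := by
    rw [hF 1 (by constructor <;> norm_num), interval_eq_Icc (by norm_num : (0:ℝ) ≤ 1)]
  have hG1 : G 1 = G 0 + ∫ t in I, g t := by
    rw [hG 1 (by constructor <;> norm_num), interval_eq_Icc (by norm_num : (0:ℝ) ≤ 1)]
  rw [hsplit, hF1, hG1]
  have := hsum
  rw [hPid, hQid] at this
  rw [show (F 0 * (∫ t in I, g t) + (∫ t in I, Φ t * g t)
        + ((∫ t in I, f t) * G 0 + (∫ t in I, f t * Ψ t)))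
      = F 0 * (∫ t in I, g t) + (∫ t in I, f t) * G 0
        + ((∫ t in I, Φ t * g t) + (∫ t in I, f t * Ψ t)) by ring, this]
  ring

lemma IsW1.continuousOn {f f' : ℝ → ℂ} (h : IsW1 f f') : ContinuousOn f (Icc (0:ℝ) 1) := by
  have hprim : ContinuousOn (fun t => f 0 + ∫ s in (0:ℝ)..t, f' s) (Icc (0:ℝ) 1) := by
    refine continuousOn_const.add ?_
    have := intervalIntegral.continuousOn_primitive_interval
      (a := (0:ℝ)) (b := (1:ℝ)) (μ := volume) (f := f') (by simpa using h.1)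
    simpa using this
  exact hprim.congr h.2.2

lemma IsW1.integrableOn {f f' : ℝ → ℂ} (h : IsW1 f f') : IntegrableOn f (Icc (0:ℝ) 1) :=
  h.continuousOn.integrableOn_Icc

lemma IsW1.sq_integrableOn {f f' : ℝ → ℂ} (h : IsW1 f f') :
    IntegrableOn (fun t => ‖f t‖ ^ 2) (Icc (0:ℝ) 1) :=
  ((h.continuousOn.norm).pow 2).integrableOn_Icc

lemma sqL2_nonneg (f : ℝ → ℂ) : 0 ≤ sqL2 f :=
  integral_nonneg (fun t => sq_nonneg _)

lemma IsW1.norm_sq_le_at {f f' : ℝ → ℂ} (h : IsW1 f f') {t : ℝ} (ht : t ∈ Icc (0:ℝ) 1) :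
    ‖f t‖ ^ 2 ≤ 2 * (sqL2 f + sqL2 f') := by
  set a := ∫ s in Icc (0:ℝ) 1, ‖f s‖ with ha
  set c := ∫ s in Icc (0:ℝ) 1, ‖f' s‖ with hc
  have hfI : IntegrableOn f (Icc (0:ℝ) 1) := h.integrableOn
  have hnormint : IntegrableOn (fun s => ‖f s‖) (Icc (0:ℝ) 1) := hfI.norm
  have hnormint' : IntegrableOn (fun s => ‖f' s‖) (Icc (0:ℝ) 1) := h.1.norm
  have ha0 : 0 ≤ a := setIntegral_nonneg measurableSet_Icc (fun s _ => norm_nonneg _)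
  have hc0 : 0 ≤ c := setIntegral_nonneg measurableSet_Icc (fun s _ => norm_nonneg _)
  -- pointwise: ‖f t‖ ≤ ‖f s‖ + c for all s in Icc
  have hptwise : ∀ s ∈ Icc (0:ℝ) 1, ‖f t‖ ≤ ‖f s‖ + c := by
    intro s hs
    have hint : ∀ r ∈ Icc (0:ℝ) 1, IntervalIntegrable f' volume 0 r := by
      intro r hr
      apply IntegrableOn.intervalIntegrable
      apply h.1.mono_set
      rw [uIcc_of_le hr.1]
      exact Icc_subset_Icc le_rfl hr.2
    have hdiff : f t - f s = ∫ r in s..t, f' r := by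
      rw [h.2.2 t ht, h.2.2 s hs]
      rw [show f 0 + (∫ r in (0:ℝ)..t, f' r) - (f 0 + ∫ r in (0:ℝ)..s, f' r)
        = (∫ r in (0:ℝ)..t, f' r) - ∫ r in (0:ℝ)..s, f' r by ring]
      exact intervalIntegral.integral_interval_sub_left (hint t ht) (hint s hs)
    have hbd : ‖∫ r in s..t, f' r‖ ≤ c := by
      refine le_trans (intervalIntegral.norm_integral_le_integral_norm_uIoc) ?_
      refine setIntegral_mono_set hnormint' ?_ ?_
      · filter_upwards with r using norm_nonneg _
      · filter_upwards with r hr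
        rcases le_total s t with hst | hst
        · rw [uIoc_of_le hst] at hr
          exact ⟨le_trans hs.1 (le_of_lt hr.1), le_trans hr.2 ht.2⟩
        · rw [uIoc_of_ge hst] at hr
          exact ⟨le_trans ht.1 (le_of_lt hr.1), le_trans hr.2 hs.2⟩
    calc ‖f t‖ = ‖f s + (f t - f s)‖ := by ring_nf
    _ ≤ ‖f s‖ + ‖f t - f s‖ := norm_add_le _ _
    _ ≤ ‖f s‖ + c := by rw [hdiff]; exact add_le_add le_rfl hbd
  -- integrate over s
  have hle : ‖f t‖ ≤ a + c := by
    have h1 : ‖f t‖ = ∫ s in Icc (0:ℝ) 1, ‖f t‖ := by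
      rw [setIntegral_const]; simp [volume_I]
    rw [h1]
    have h2 : ∫ s in Icc (0:ℝ) 1, ‖f t‖ ≤ ∫ s in Icc (0:ℝ) 1, (‖f s‖ + c) :=
      setIntegral_mono_on (integrableOn_const (by rw [volume_I]; norm_num))
        (hnormint.add (integrableOn_const (by rw [volume_I]; norm_num)))
        measurableSet_Icc hptwise
    refine le_trans h2 ?_
    rw [integral_add hnormint (integrableOn_const (by rw [volume_I]; norm_num)),
      setIntegral_const]
    simp [volume_I, ha]
  have hA : a ^ 2 ≤ sqL2 f := sq_setIntegral_le hnormint h.sq_integrableOn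
  have hC : c ^ 2 ≤ sqL2 f' := by
    have := sq_setIntegral_le hnormint' h.2.1
    exact this
  nlinarith [norm_nonneg (f t), sq_nonneg (a - c)]

lemma integrable_conj_of {μ : Measure ℝ} {f : ℝ → ℂ} (h : Integrable f μ) :
    Integrable (fun t => (starRingEnd ℂ) (f t)) μ := by
  have := (LinearIsometryEquiv.integrable_comp_iff (RCLike.conjLIE (K := ℂ))).2 h
  simpa using this

set_option maxHeartbeats 1000000 in
lemma IsW2.comb {f f' f'' : ℝ → ℂ} (h : IsW2 f f' f'') (b : ℂ) :
    IsW1 (fun t => f' t + b * f t) (fun t => f'' t + b * f' t) := by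
  obtain ⟨h1, h2⟩ := h
  refine ⟨h2.1.add (h1.1.const_mul b), ?_, ?_⟩
  · have hint : Integrable (fun t => f'' t + b * f' t) (volume.restrict (Icc (0:ℝ) 1)) :=
      h2.1.add (h1.1.const_mul b)
    have hmeas : AEStronglyMeasurable (fun t => ‖f'' t + b * f' t‖ ^ 2)
        (volume.restrict (Icc (0:ℝ) 1)) := by
      have := hint.aestronglyMeasurable.norm
      exact this.pow 2
    have hgint : Integrable (fun t => 2 * ‖f'' t‖ ^ 2 + 2 * ‖b‖ ^ 2 * ‖f' t‖ ^ 2)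
        (volume.restrict (Icc (0:ℝ) 1)) :=
      (h2.2.1.const_mul 2).add (h1.2.1.const_mul (2 * ‖b‖ ^ 2))
    refine Integrable.mono' hgint hmeas ?_
    filter_upwards with t
    have h3 : ‖f'' t + b * f' t‖ ≤ ‖f'' t‖ + ‖b‖ * ‖f' t‖ := by
      refine le_trans (norm_add_le _ _) ?_
      rw [norm_mul]
    rw [Real.norm_eq_abs, abs_of_nonneg (sq_nonneg _)]
    nlinarith [norm_nonneg (f'' t), norm_nonneg (f' t), norm_nonneg b,
      sq_nonneg (‖f'' t‖ - ‖b‖ * ‖f' t‖), norm_nonneg (f'' t + b * f' t)]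
  · intro t ht
    have hint : ∀ (u : ℝ → ℂ), IntegrableOn u (Icc (0:ℝ) 1) →
        IntervalIntegrable u volume 0 t := by
      intro u hu
      apply IntegrableOn.intervalIntegrable
      apply hu.mono_set
      rw [uIcc_of_le ht.1]
      exact Icc_subset_Icc le_rfl ht.2
    rw [intervalIntegral.integral_add (hint _ h2.1) ((hint _ h1.1).const_mul b),
      intervalIntegral.integral_const_mul]
    beta_reduce
    rw [h2.2.2 t ht, h1.2.2 t ht]
    ring

lemma edge_identity {b : ℂ} {f f' f'' g g' : ℝ → ℂ}
    (hf : IsW2 f f' f'') (hg : IsW1 g g')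
    (hode : ∀ᵐ t ∂(volume.restrict (Ioo (0:ℝ) 1)), Lexpr b f f' f'' t = 0) :
    ∫ t in Icc (0:ℝ) 1, (f' t + b * f t) * (starRingEnd ℂ) (g' t + b * g t)
      = (f' 1 + b * f 1) * (starRingEnd ℂ) (g 1)
        - (f' 0 + b * f 0) * (starRingEnd ℂ) (g 0) := by
  have hcomb := hf.comb b
  have hodeIcc : ∀ᵐ t ∂(volume.restrict (Icc (0:ℝ) 1)), Lexpr b f f' f'' t = 0 := by
    rwa [← Measure.restrict_congr_set Ioo_ae_eq_Icc]
  have hG : ∀ t ∈ Icc (0:ℝ) 1,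
      (starRingEnd ℂ) (g t) = (starRingEnd ℂ) (g 0) + ∫ s in (0:ℝ)..t, (starRingEnd ℂ) (g' s) := by
    intro t ht
    rw [intervalIntegral_conj, ← map_add, ← hg.2.2 t ht]
  have hparts := parts (F := fun t => f' t + b * f t) (G := fun t => (starRingEnd ℂ) (g t))
    (hcomb.1) (integrable_conj_of hg.1) (hcomb.2.2) hG
  have hcongr : ∫ t in Icc (0:ℝ) 1, (f' t + b * f t) * (starRingEnd ℂ) (g' t + b * g t)
      = ∫ t in Icc (0:ℝ) 1, ((f' t + b * f t) * (starRingEnd ℂ) (g' t)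
          + (f'' t + b * f' t) * (starRingEnd ℂ) (g t)) := by
    refine integral_congr_ae ?_
    filter_upwards [hodeIcc] with t hL
    simp only [Lexpr] at hL
    have h1 : ((‖b‖ : ℝ) : ℂ) ^ 2 = b * (starRingEnd ℂ) b := by
      rw [← Complex.ofReal_pow, Complex.sq_norm, Complex.mul_conj]
    have h2 : (starRingEnd ℂ) b = b - 2 * Complex.I * (b.im : ℂ) := by
      have := Complex.sub_conj b
      push_cast at this
      linear_combination -this
    rw [h1, h2] at hL
    rw [map_add, map_mul, h2]
    ring_nf
    ring_nf at hL
    linear_combination ((starRingEnd ℂ) (g t)) * hL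
  rw [hcongr, hparts]

namespace TreeSetup

variable (S : TreeSetup)

lemma exists_enum {j : ℕ} (hj : 2 ≤ j) : ∃ l, S.enum (S.k j) l = j :=
  S.henum_surj (S.k j) j (S.hk_odd j hj) hj rfl

lemma ptil_pos {j : ℕ} (hj : 2 ≤ j) : 0 < S.ptil j := by
  obtain ⟨l, hl⟩ := S.exists_enum hj
  have h := S.hptil_enum (S.k j) l (S.hk_odd j hj)
  rw [hl] at h
  rw [h]
  exact S.hp_pos l

lemma b_bound : ∃ K : ℝ, 0 ≤ K ∧ ∀ j, 1 ≤ j → ‖S.b j‖ ≤ K := by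
  obtain ⟨M, hM⟩ := S.hθ_bdd
  refine ⟨max ‖S.b 1‖ M, le_max_of_le_left (norm_nonneg _), ?_⟩
  intro j hj
  rcases eq_or_lt_of_le hj with h1 | h2
  · rw [← h1]
    exact le_max_left _ _
  · obtain ⟨l, hl⟩ := S.exists_enum h2
    rw [← hl, S.hb_enum _ _ (S.hk_odd j h2)]
    refine le_max_of_le_right ?_
    exact hM l

lemma alpha_pos : ∀ j, 1 ≤ j → 0 < S.α j := by
  suffices H : ∀ n j, 1 ≤ j → S.nu j = n → 0 < S.α j by
    intro j hj; exact H (S.nu j) j hj rfl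
  intro n
  induction n with
  | zero =>
    intro j hj hn
    rcases eq_or_lt_of_le hj with h1 | h2
    · rw [← h1, S.hα1]; norm_num
    · exfalso
      have := S.hnu_rec j h2
      omega
  | succ n ih =>
    intro j hj hn
    rcases eq_or_lt_of_le hj with h1 | h2
    · rw [← h1, S.hα1]; norm_num
    · rw [S.hα_rec j h2]
      have hkodd := S.hk_odd j h2
      have hk1 : 1 ≤ S.k j := hkodd.pos
      have hknu : S.nu (S.k j) = n := by
        have := S.hnu_rec j h2
        omega
      exact mul_pos (S.ptil_pos h2) (ih (S.k j) hk1 hknu)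

lemma alpha_nonneg (j : ℕ) : 0 ≤ S.α j := by
  rcases Nat.eq_zero_or_pos j with h | h
  · rw [h, S.hα0]
  · exact le_of_lt (S.alpha_pos j h)

lemma alpha_enum {j : ℕ} (hj : Odd j) (l : ℕ) :
    S.α (S.enum j l) = S.p l * S.α j := by
  have h2 : 2 ≤ S.enum j l := S.henum_ge j l hj
  rw [S.hα_rec _ h2, S.henum_k j l hj, S.hptil_enum j l hj]

end TreeSetup

lemma sqL2_add_mul_le {b : ℂ} {f g : ℝ → ℂ}
    (hf2 : IntegrableOn (fun t => ‖f t‖ ^ 2) (Icc (0:ℝ) 1))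
    (hg2 : IntegrableOn (fun t => ‖g t‖ ^ 2) (Icc (0:ℝ) 1))
    (hc2 : IntegrableOn (fun t => ‖f t + b * g t‖ ^ 2) (Icc (0:ℝ) 1)) :
    sqL2 (fun t => f t + b * g t) ≤ 2 * sqL2 f + 2 * ‖b‖ ^ 2 * sqL2 g := by
  have hmono : sqL2 (fun t => f t + b * g t)
      ≤ ∫ t in Icc (0:ℝ) 1, (2 * ‖f t‖ ^ 2 + 2 * ‖b‖ ^ 2 * ‖g t‖ ^ 2) := by
    refine setIntegral_mono_on hc2 ((hf2.const_mul 2).add (hg2.const_mul (2 * ‖b‖ ^ 2)))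
      measurableSet_Icc ?_
    intro t _
    have h3 : ‖f t + b * g t‖ ≤ ‖f t‖ + ‖b‖ * ‖g t‖ :=
      le_trans (norm_add_le _ _) (by rw [norm_mul])
    nlinarith [norm_nonneg (f t), norm_nonneg (g t), norm_nonneg b,
      norm_nonneg (f t + b * g t), sq_nonneg (‖f t‖ - ‖b‖ * ‖g t‖)]
  refine le_trans hmono ?_
  rw [integral_add (hf2.const_mul 2) (hg2.const_mul (2 * ‖b‖ ^ 2)), integral_const_mul,
    integral_const_mul]
  exact le_of_eq rfl

/-- If `y` solves the boundary value problem `ℬ` and `z ∈ W¹_{2,α}`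
satisfies the matching conditions together with the homogeneous boundary conditions
`z₁(0) = 0`, `z_j(1) = 0` (`j ∈ ℕ₂`), then the first variation of the energy
functional vanishes. -/
theorem first_variation_vanishes (S : TreeSetup) (φ0 φ1 : ℂ)
    (y y' y'' z z' : ℕ → ℝ → ℂ)
    (hy : SatisfiesBVP S φ0 φ1 y y' y'')
    (hz : MemW1α S z z')
    (hz0 : z 1 0 = 0)
    (hzmatch : ∀ j, 2 ≤ j → z (S.k j) 1 = z j 0)
    (hz1 : ∀ j, 2 ≤ j → Even j → z j 1 = 0) :
    ∑' j, (S.α j : ℂ) * ∫ t in Icc (0:ℝ) 1,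
        (y' j t + S.b j * y j t) * (starRingEnd ℂ) (z' j t + S.b j * z j t) = 0 := by
  classical
  obtain ⟨⟨hyreg, hysum⟩, hode, hy0, hymatch, hy1, hkirch⟩ := hy
  obtain ⟨hzreg, hzsum⟩ := hz
  obtain ⟨K, hK0, hKb⟩ := S.b_bound
  set u : ℕ → ℝ → ℂ := fun j t => y' j t + S.b j * y j t with hu
  set A : ℕ → ℂ := fun j => (S.α j : ℂ) * (u j 1 * (starRingEnd ℂ) (z j 1)) with hA
  set B : ℕ → ℂ := fun j => (S.α j : ℂ) * (u j 0 * (starRingEnd ℂ) (z j 0)) with hB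
  set Sy : ℕ → ℝ := fun j => sqL2 (y j) + sqL2 (y' j) + sqL2 (y'' j) with hSy
  set Sz : ℕ → ℝ := fun j => sqL2 (z j) + sqL2 (z' j) with hSz
  set Cu : ℝ := 4 + 4 * K ^ 2 with hCu
  have hmem0 : (0:ℝ) ∈ Icc (0:ℝ) 1 := by norm_num
  have hmem1 : (1:ℝ) ∈ Icc (0:ℝ) 1 := by norm_num
  -- boundary bounds for u
  have hubd : ∀ j, 1 ≤ j → ∀ t ∈ Icc (0:ℝ) 1, ‖u j t‖ ^ 2 ≤ Cu * Sy j := by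
    intro j hj t ht
    have hw2 := hyreg j hj
    have hcomb := hw2.comb (S.b j)
    have h1 : ‖u j t‖ ^ 2 ≤ 2 * (sqL2 (fun s => y' j s + S.b j * y j s)
        + sqL2 (fun s => y'' j s + S.b j * y' j s)) := hcomb.norm_sq_le_at ht
    have h2 : sqL2 (fun s => y' j s + S.b j * y j s)
        ≤ 2 * sqL2 (y' j) + 2 * ‖S.b j‖ ^ 2 * sqL2 (y j) :=
      sqL2_add_mul_le hw2.1.2.1 hw2.1.sq_integrableOn hcomb.sq_integrableOn
    have h3 : sqL2 (fun s => y'' j s + S.b j * y' j s)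
        ≤ 2 * sqL2 (y'' j) + 2 * ‖S.b j‖ ^ 2 * sqL2 (y' j) :=
      sqL2_add_mul_le hw2.2.2.1 hw2.1.2.1 hcomb.2.1
    have hKj := hKb j hj
    have hbn := norm_nonneg (S.b j)
    have hbK : ‖S.b j‖ ^ 2 ≤ K ^ 2 := by nlinarith
    simp only [hSy, hCu]
    nlinarith [sqL2_nonneg (y j), sqL2_nonneg (y' j), sqL2_nonneg (y'' j),
      sqL2_nonneg (fun s => y' j s + S.b j * y j s),
      sqL2_nonneg (fun s => y'' j s + S.b j * y' j s)]
  have hzbd : ∀ j, 1 ≤ j → ∀ t ∈ Icc (0:ℝ) 1, ‖z j t‖ ^ 2 ≤ 2 * Sz j := by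
    intro j hj t ht
    have := (hzreg j hj).norm_sq_le_at ht
    simpa [hSz] using this
  have hSynn : ∀ j, 0 ≤ Sy j := by
    intro j
    simp only [hSy]
    have := sqL2_nonneg (y j); have := sqL2_nonneg (y' j); have := sqL2_nonneg (y'' j)
    linarith
  have hSznn : ∀ j, 0 ≤ Sz j := by
    intro j
    simp only [hSz]
    have := sqL2_nonneg (z j); have := sqL2_nonneg (z' j)
    linarith
  -- summable dominating sequence
  have hD : Summable (fun j => S.α j * (Cu * Sy j + 2 * Sz j)) := by
    refine Summable.congr ((hysum.mul_left Cu).add (hzsum.mul_left 2)) ?_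
    intro j
    simp only [hSy, hSz]
    ring
  have hnormcoef : ∀ j, ‖((S.α j : ℝ) : ℂ)‖ = S.α j := by
    intro j
    rw [Complex.norm_real, Real.norm_eq_abs, abs_of_nonneg (S.alpha_nonneg j)]
  have hnormA : ∀ j, ‖A j‖ ≤ S.α j * (Cu * Sy j + 2 * Sz j) := by
    intro j
    rcases Nat.eq_zero_or_pos j with h0 | h1
    · subst h0
      simp [hA, S.hα0]
    · have hu1 := hubd j h1 1 hmem1
      have hz1' := hzbd j h1 1 hmem1
      have heq : ‖A j‖ = S.α j * (‖u j 1‖ * ‖z j 1‖) := by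
        simp only [hA]
        rw [norm_mul, norm_mul, RCLike.norm_conj, hnormcoef]
      rw [heq]
      have hα := S.alpha_nonneg j
      nlinarith [norm_nonneg (u j 1), norm_nonneg (z j 1), hSynn j, hSznn j,
        sq_nonneg (‖u j 1‖ - ‖z j 1‖),
        mul_le_mul_of_nonneg_left hu1 hα, mul_le_mul_of_nonneg_left hz1' hα,
        mul_le_mul_of_nonneg_left (sq_nonneg (‖u j 1‖ - ‖z j 1‖)) hα]
  have hnormB : ∀ j, ‖B j‖ ≤ S.α j * (Cu * Sy j + 2 * Sz j) := by
    intro j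
    rcases Nat.eq_zero_or_pos j with h0 | h1
    · subst h0
      simp [hB, S.hα0]
    · have hu1 := hubd j h1 0 hmem0
      have hz1' := hzbd j h1 0 hmem0
      have heq : ‖B j‖ = S.α j * (‖u j 0‖ * ‖z j 0‖) := by
        simp only [hB]
        rw [norm_mul, norm_mul, RCLike.norm_conj, hnormcoef]
      rw [heq]
      have hα := S.alpha_nonneg j
      nlinarith [norm_nonneg (u j 0), norm_nonneg (z j 0), hSynn j, hSznn j,
        sq_nonneg (‖u j 0‖ - ‖z j 0‖),
        mul_le_mul_of_nonneg_left hu1 hα, mul_le_mul_of_nonneg_left hz1' hα,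
        mul_le_mul_of_nonneg_left (sq_nonneg (‖u j 0‖ - ‖z j 0‖)) hα]
  have hSA : Summable A := Summable.of_norm_bounded hD hnormA
  have hSB : Summable B := Summable.of_norm_bounded hD hnormB
  -- per-edge identity
  have hterm : ∀ j, (S.α j : ℂ) * (∫ t in Icc (0:ℝ) 1,
      (y' j t + S.b j * y j t) * (starRingEnd ℂ) (z' j t + S.b j * z j t)) = A j - B j := by
    intro j
    rcases Nat.eq_zero_or_pos j with h0 | h1
    · subst h0
      simp [hA, hB, S.hα0]
    · rw [edge_identity (hyreg j h1) (hzreg j h1) (hode j h1)]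
      simp only [hA, hB, hu]
      ring
  rw [tsum_congr hterm, hSA.tsum_sub hSB]
  -- the telescoping identity ∑ A = ∑ B
  have hpsum : Summable S.p := ⟨1, S.hp_sum⟩
  have hAodd : ∀ j, Odd j → A j = ∑' l, B (S.enum j l) := by
    intro j hjodd
    have hj1 : 1 ≤ j := hjodd.pos
    have hαj := S.alpha_pos j hj1
    have hs1 : Summable (fun l => (S.p l : ℂ) * S.b (S.enum j l)) := by
      refine Summable.of_norm_bounded (g := fun l => S.p l * K) (hpsum.mul_right K) ?_
      intro l
      rw [norm_mul, Complex.norm_real, Real.norm_eq_abs, abs_of_pos (S.hp_pos l)]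
      have h2 : 2 ≤ S.enum j l := S.henum_ge j l hjodd
      exact mul_le_mul_of_nonneg_left (hKb _ (le_trans one_le_two h2)) (le_of_lt (S.hp_pos l))
    have hSyEnum : Summable (fun l => S.α (S.enum j l) * Sy (S.enum j l)) :=
      hysum.comp_injective (S.henum_inj j hjodd)
    have hs2 : Summable (fun l => (S.p l : ℂ) * y' (S.enum j l) 0) := by
      refine Summable.of_norm_bounded
        (g := fun l => S.p l / 2 + (1 / S.α j) * (S.α (S.enum j l) * Sy (S.enum j l)))
        ((hpsum.div_const 2).add (hSyEnum.mul_left _)) ?_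
      intro l
      have hν2 : 2 ≤ S.enum j l := S.henum_ge j l hjodd
      have hν1 : 1 ≤ S.enum j l := le_trans one_le_two hν2
      have hbd : ‖y' (S.enum j l) 0‖ ^ 2
          ≤ 2 * (sqL2 (y' (S.enum j l)) + sqL2 (y'' (S.enum j l))) :=
        (hyreg _ hν1).2.norm_sq_le_at hmem0
      have hαe : S.α (S.enum j l) = S.p l * S.α j := S.alpha_enum hjodd l
      rw [norm_mul, Complex.norm_real, Real.norm_eq_abs, abs_of_pos (S.hp_pos l)]
      have hx : ‖y' (S.enum j l) 0‖ ≤ (1 + ‖y' (S.enum j l) 0‖ ^ 2) / 2 := by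
        nlinarith [sq_nonneg (‖y' (S.enum j l) 0‖ - 1)]
      have hSyν : sqL2 (y' (S.enum j l)) + sqL2 (y'' (S.enum j l)) ≤ Sy (S.enum j l) := by
        simp only [hSy]
        have := sqL2_nonneg (y (S.enum j l))
        linarith
      have hfin : ‖y' (S.enum j l) 0‖ ≤ 1 / 2 + Sy (S.enum j l) := by
        simp only [hSy]
        linarith [hx, hbd, sqL2_nonneg (y (S.enum j l))]
      have hrw : S.p l / 2 + (1 / S.α j) * (S.α (S.enum j l) * Sy (S.enum j l))
          = S.p l / 2 + S.p l * Sy (S.enum j l) := by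
        rw [hαe]
        field_simp
      beta_reduce
      rw [hrw]
      calc S.p l * ‖y' (S.enum j l) 0‖
          ≤ S.p l * (1 / 2 + Sy (S.enum j l)) :=
            mul_le_mul_of_nonneg_left hfin (le_of_lt (S.hp_pos l))
        _ = S.p l / 2 + S.p l * Sy (S.enum j l) := by ring
    have hs3 : Summable (fun l => (S.p l : ℂ) * S.b (S.enum j l) * y j 1) := hs1.mul_right _
    have hkey : y' j 1 + S.b j * y j 1
        = (∑' l, (S.p l : ℂ) * y' (S.enum j l) 0)
          + (∑' l, (S.p l : ℂ) * S.b (S.enum j l)) * y j 1 := by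
      linear_combination hkirch j hjodd
    have hBν : ∀ l, B (S.enum j l) = ((S.α j : ℂ) * (starRingEnd ℂ) (z j 1)) *
        ((S.p l : ℂ) * y' (S.enum j l) 0 + (S.p l : ℂ) * S.b (S.enum j l) * y j 1) := by
      intro l
      have hν2 : 2 ≤ S.enum j l := S.henum_ge j l hjodd
      have hkν : S.k (S.enum j l) = j := S.henum_k j l hjodd
      have hαe : S.α (S.enum j l) = S.p l * S.α j := S.alpha_enum hjodd l
      have hy0ν : y (S.enum j l) 0 = y j 1 := by rw [← hymatch _ hν2, hkν]
      have hz0ν : z (S.enum j l) 0 = z j 1 := by rw [← hzmatch _ hν2, hkν]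
      simp only [hB, hu]
      rw [hy0ν, hz0ν, hαe]
      push_cast
      ring
    calc A j = ((S.α j : ℂ) * (starRingEnd ℂ) (z j 1)) * (y' j 1 + S.b j * y j 1) := by
          simp only [hA, hu]
          ring
      _ = ((S.α j : ℂ) * (starRingEnd ℂ) (z j 1)) *
          ((∑' l, (S.p l : ℂ) * y' (S.enum j l) 0)
            + (∑' l, (S.p l : ℂ) * S.b (S.enum j l)) * y j 1) := by rw [hkey]
      _ = ((S.α j : ℂ) * (starRingEnd ℂ) (z j 1)) *
          (∑' l, ((S.p l : ℂ) * y' (S.enum j l) 0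
            + (S.p l : ℂ) * S.b (S.enum j l) * y j 1)) := by
          rw [hs2.tsum_add hs3, tsum_mul_right]
      _ = ∑' l, ((S.α j : ℂ) * (starRingEnd ℂ) (z j 1)) *
          ((S.p l : ℂ) * y' (S.enum j l) 0
            + (S.p l : ℂ) * S.b (S.enum j l) * y j 1) := tsum_mul_left.symm
      _ = ∑' l, B (S.enum j l) := tsum_congr fun l => (hBν l).symm
  -- zero values
  have hAzero : ∀ m, ¬ Odd m → A m = 0 := by
    intro m hm
    rcases Nat.eq_zero_or_pos m with h0 | h1
    · subst h0; simp [hA, S.hα0]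
    · have heven : Even m := Nat.not_odd_iff_even.1 hm
      have h2 : 2 ≤ m := by
        obtain ⟨c, hc⟩ := heven
        omega
      simp [hA, hz1 m h2 heven]
  have hB0 : B 0 = 0 := by simp [hB, S.hα0]
  have hB1 : B 1 = 0 := by simp [hB, hz0]
  -- reindexing
  have hemapinj : Function.Injective (fun q : ℕ × ℕ => S.enum (2 * q.1 + 1) q.2) := by
    rintro ⟨a, l⟩ ⟨a', l'⟩ h
    simp only at h
    have hodd : Odd (2 * a + 1) := ⟨a, rfl⟩
    have hodd' : Odd (2 * a' + 1) := ⟨a', rfl⟩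
    have h1 := S.henum_k (2 * a + 1) l hodd
    have h2 := S.henum_k (2 * a' + 1) l' hodd'
    rw [h, h2] at h1
    have ha : a = a' := by omega
    subst ha
    have := S.henum_inj (2 * a + 1) hodd h
    simp_all
  have step1 : ∑' m, A m = ∑' a, A (2 * a + 1) := by
    refine tsum_eq_tsum_of_ne_zero_bij
      (fun x : Function.support (fun a => A (2 * a + 1)) => 2 * (x : ℕ) + 1) ?_ ?_ ?_
    · intro x y hxy
      have hxy' : 2 * (x : ℕ) + 1 = 2 * (y : ℕ) + 1 := hxy
      exact Subtype.ext (by omega)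
    · intro m hm
      have hodd : Odd m := by
        by_contra hc
        exact hm (hAzero m hc)
      obtain ⟨c, hc⟩ := hodd
      refine ⟨⟨c, ?_⟩, ?_⟩
      · simp only [Function.mem_support]
        rw [← hc]
        exact hm
      · exact hc.symm
    · intro x
      rfl
  have step2 : ∑' a, A (2 * a + 1) = ∑' a, ∑' l, B (S.enum (2 * a + 1) l) :=
    tsum_congr fun a => hAodd (2 * a + 1) ⟨a, rfl⟩
  have hcompB : Summable (fun q : ℕ × ℕ => B (S.enum (2 * q.1 + 1) q.2)) :=
    hSB.comp_injective hemapinj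
  have step3 : ∑' (q : ℕ × ℕ), B (S.enum (2 * q.1 + 1) q.2)
      = ∑' a, ∑' l, B (S.enum (2 * a + 1) l) :=
    hcompB.tsum_prod' (fun a => hSB.comp_injective (S.henum_inj _ ⟨a, rfl⟩))
  have step4 : ∑' m, B m = ∑' (q : ℕ × ℕ), B (S.enum (2 * q.1 + 1) q.2) := by
    refine tsum_eq_tsum_of_ne_zero_bij
      (fun x : Function.support (fun q : ℕ × ℕ => B (S.enum (2 * q.1 + 1) q.2)) =>
        S.enum (2 * (x : ℕ × ℕ).1 + 1) (x : ℕ × ℕ).2) ?_ ?_ ?_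
    · intro x y hxy
      exact Subtype.ext (hemapinj hxy)
    · intro m hm
      have h2 : 2 ≤ m := by
        by_contra hc
        have : m = 0 ∨ m = 1 := by omega
        rcases this with h | h
        · rw [h] at hm; exact hm hB0
        · rw [h] at hm; exact hm hB1
      obtain ⟨c, hc⟩ := S.hk_odd m h2
      obtain ⟨l, hl⟩ := S.henum_surj (S.k m) m (S.hk_odd m h2) h2 rfl
      refine ⟨⟨(c, l), ?_⟩, ?_⟩
      · simp only [Function.mem_support]
        rw [show 2 * c + 1 = S.k m from hc.symm, hl]
        exact hm
      · simp only
        rw [show 2 * c + 1 = S.k m from hc.symm, hl]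
    · intro x
      rfl
  have hAB : ∑' m, A m = ∑' m, B m := by
    rw [step1, step2, ← step3, ← step4]
  rw [hAB, sub_self]
end
end

section
/- There exists a constant C, depending only on T and M := sup_j |b_j|, such that for every y = [y_j] ∈ W¹_{2,α} satisfying y₁(0) = 0 and the matching conditions y_{k_j}(1) = y_j(0) for all j ≥ 2, one has Σ_{j=1}^∞ α_j ∫₀¹ |y_j(t)|² dt ≤ C · Σ_{j=1}^∞ α_j ∫₀¹ |y_j'(t) + b_j y_j(t)|² dt. -/
open MeasureTheory Set

noncomputable section

namespace TreePoincare

variable {f f' : ℝ → ℂ}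

lemma sqL2_nonneg (f : ℝ → ℂ) : 0 ≤ sqL2 f :=
  integral_nonneg fun t => sq_nonneg _

lemma contOn (h : IsW1 f f') : ContinuousOn f (Icc 0 1) := by
  have h1 : IntegrableOn f' (uIcc (0:ℝ) 1) := by
    rw [uIcc_of_le (by norm_num : (0:ℝ) ≤ 1)]; exact h.1
  have hc : ContinuousOn (fun t => f 0 + ∫ s in (0:ℝ)..t, f' s) (Icc 0 1) := by
    have hc0 : ContinuousOn (fun t : ℝ => ∫ s in (0:ℝ)..t, f' s) (uIcc (0:ℝ) 1) :=
      intervalIntegral.continuousOn_primitive_interval h1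
    rw [uIcc_of_le (by norm_num : (0:ℝ) ≤ 1)] at hc0
    exact continuousOn_const.add hc0
  exact hc.congr fun t ht => h.2.2 t ht

lemma intOn (h : IsW1 f f') : IntegrableOn f (Icc (0:ℝ) 1) :=
  (contOn h).integrableOn_Icc

lemma sq_intOn (h : IsW1 f f') :
    IntegrableOn (fun t => ‖f t‖ ^ 2) (Icc (0:ℝ) 1) :=
  ((contOn h).norm.pow 2).integrableOn_Icc

lemma sub_eq (h : IsW1 f f') {a t : ℝ} (ha : 0 ≤ a) (hat : a ≤ t) (ht : t ≤ 1) :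
    f t = f a + ∫ s in a..t, f' s := by
  have i1 : IntervalIntegrable f' volume 0 a := by
    rw [intervalIntegrable_iff_integrableOn_Ioc_of_le ha]
    exact h.1.mono_set ((Ioc_subset_Icc_self).trans (Icc_subset_Icc le_rfl (hat.trans ht)))
  have i2 : IntervalIntegrable f' volume a t := by
    rw [intervalIntegrable_iff_integrableOn_Ioc_of_le hat]
    exact h.1.mono_set ((Ioc_subset_Icc_self).trans (Icc_subset_Icc ha ht))
  have e1 := h.2.2 t ⟨ha.trans hat, ht⟩
  have e2 := h.2.2 a ⟨ha, hat.trans ht⟩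
  have hadd := intervalIntegral.integral_add_adjacent_intervals i1 i2
  rw [e1, e2, ← hadd]
  ring


lemma g_intOn (h : IsW1 f f') (b : ℂ) :
    IntegrableOn (fun s => f' s + b * f s) (Icc (0:ℝ) 1) :=
  h.1.add ((intOn h).const_mul b)

lemma interval_step {M : ℝ} {b : ℂ} (hb : ‖b‖ ≤ M)
    (h : IsW1 f f') {a a' : ℝ} (ha : 0 ≤ a) (haa : a ≤ a') (ha' : a' ≤ 1)
    (hlen : M * (a' - a) ≤ 1/2) :
    ∀ t ∈ Icc a a', ‖f t‖ ≤ 2*‖f a‖ + 2*(∫ s in Icc (0:ℝ) 1, ‖f' s + b * f s‖) := by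
  have hM : 0 ≤ M := le_trans (norm_nonneg b) hb
  set g : ℝ → ℂ := fun s => f' s + b * f s with hg
  set G : ℝ := ∫ s in Icc (0:ℝ) 1, ‖g s‖ with hG
  have hgi : IntegrableOn g (Icc (0:ℝ) 1) := g_intOn h b
  have hGnn : 0 ≤ G := integral_nonneg fun s => norm_nonneg _
  have hsub : Icc a a' ⊆ Icc (0:ℝ) 1 := Icc_subset_Icc ha ha'
  -- maximum point
  obtain ⟨x₀, hx₀, hmax⟩ := isCompact_Icc.exists_isMaxOn (nonempty_Icc.2 haa)
    (((contOn h).mono hsub).norm)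
  set Sm : ℝ := ‖f x₀‖ with hSm
  have hSnn : 0 ≤ Sm := norm_nonneg _
  -- the key pointwise inequality
  have key : ∀ t ∈ Icc a a', ‖f t‖ ≤ ‖f a‖ + G + (1/2) * Sm := by
    intro t ht
    have hat : a ≤ t := ht.1
    have ht1 : t ≤ 1 := ht.2.trans ha'
    have hfi' : IntegrableOn f' (Icc a t) :=
      h.1.mono_set (Icc_subset_Icc ha ht1)
    have hgi' : IntegrableOn (fun s => ‖g s‖) (Icc a t) :=
      (hgi.mono_set (Icc_subset_Icc ha ht1)).norm
    have hfi : IntegrableOn (fun s => ‖f s‖) (Icc a t) :=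
      ((intOn h).mono_set (Icc_subset_Icc ha ht1)).norm
    have e : f t = f a + ∫ s in a..t, f' s := sub_eq h ha hat ht1
    have step1 : ‖f t‖ ≤ ‖f a‖ + ∫ s in a..t, ‖f' s‖ := by
      rw [e]
      exact (norm_add_le _ _).trans (by
        gcongr
        exact intervalIntegral.norm_integral_le_integral_norm hat)
    have hptw : ∀ s ∈ Icc a t, ‖f' s‖ ≤ ‖g s‖ + M * ‖f s‖ := by
      intro s _
      have : f' s = g s - b * f s := by simp [hg]
      rw [this]
      refine (norm_sub_le _ _).trans ?_
      gcongr
      rw [norm_mul]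
      exact mul_le_mul_of_nonneg_right hb (norm_nonneg _)
    have step2 : (∫ s in a..t, ‖f' s‖) ≤ ∫ s in a..t, (‖g s‖ + M * ‖f s‖) := by
      apply intervalIntegral.integral_mono_on hat
      · rw [intervalIntegrable_iff_integrableOn_Icc_of_le hat]; exact hfi'.norm
      · rw [intervalIntegrable_iff_integrableOn_Icc_of_le hat]
        exact hgi'.add (hfi.const_mul M)
      · exact hptw
    have step3 : (∫ s in a..t, (‖g s‖ + M * ‖f s‖))
        = (∫ s in a..t, ‖g s‖) + ∫ s in a..t, M * ‖f s‖ := by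
      apply intervalIntegral.integral_add
      · rw [intervalIntegrable_iff_integrableOn_Icc_of_le hat]; exact hgi'
      · rw [intervalIntegrable_iff_integrableOn_Icc_of_le hat]
        exact hfi.const_mul M
    have step4 : (∫ s in a..t, ‖g s‖) ≤ G := by
      rw [intervalIntegral.integral_of_le hat]
      apply setIntegral_mono_set hgi.norm
      · exact Filter.Eventually.of_forall fun s => norm_nonneg _
      · exact HasSubset.Subset.eventuallyLE
          ((Ioc_subset_Icc_self).trans (Icc_subset_Icc ha ht1))
    have step5 : (∫ s in a..t, M * ‖f s‖) ≤ M * (t - a) * Sm := by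
      have : (∫ s in a..t, M * ‖f s‖) ≤ ∫ s in a..t, M * Sm := by
        apply intervalIntegral.integral_mono_on hat
        · rw [intervalIntegrable_iff_integrableOn_Icc_of_le hat]
          exact hfi.const_mul M
        · exact intervalIntegrable_const
        · intro s hs
          have : ‖f s‖ ≤ Sm := hmax ⟨hs.1, hs.2.trans ht.2⟩
          exact mul_le_mul_of_nonneg_left this hM
      simpa [mul_comm, mul_assoc, mul_left_comm] using this
    have step6 : M * (t - a) * Sm ≤ (1/2) * Sm := by
      apply mul_le_mul_of_nonneg_right _ hSnn
      calc M * (t - a) ≤ M * (a' - a) := by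
            apply mul_le_mul_of_nonneg_left _ hM
            linarith [ht.2]
        _ ≤ 1/2 := hlen
    calc ‖f t‖ ≤ ‖f a‖ + ∫ s in a..t, ‖f' s‖ := step1
      _ ≤ ‖f a‖ + ((∫ s in a..t, ‖g s‖) + ∫ s in a..t, M * ‖f s‖) := by
          rw [← step3]; linarith [step2]
      _ ≤ ‖f a‖ + (G + (1/2) * Sm) := by
          have := step5.trans step6
          linarith [step4]
      _ = ‖f a‖ + G + (1/2) * Sm := by ring
  -- conclude
  have hSb : Sm ≤ 2*‖f a‖ + 2*G := by
    have := key x₀ hx₀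
    rw [← hSm] at this
    linarith
  intro t ht
  have h1 : ‖f t‖ ≤ Sm := hmax ht
  linarith


lemma global_bound {M : ℝ} {b : ℂ} (hb : ‖b‖ ≤ M)
    (h : IsW1 f f') {n : ℕ} (hn : 2 * M ≤ n) (hn1 : 1 ≤ n) :
    ∀ t ∈ Icc (0:ℝ) 1,
      ‖f t‖ ≤ 2^n * (‖f 0‖ + 2 * ∫ s in Icc (0:ℝ) 1, ‖f' s + b * f s‖) := by
  have hM : 0 ≤ M := le_trans (norm_nonneg b) hb
  set G : ℝ := ∫ s in Icc (0:ℝ) 1, ‖f' s + b * f s‖ with hG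
  have hGnn : 0 ≤ G := integral_nonneg fun s => norm_nonneg _
  have hnpos : (0:ℝ) < n := by exact_mod_cast hn1
  have claim : ∀ i : ℕ, i ≤ n → ∀ t ∈ Icc (0:ℝ) ((i:ℝ)/n),
      ‖f t‖ ≤ 2^i * ‖f 0‖ + (2^(i+1) - 2) * G := by
    intro i
    induction i with
    | zero =>
      intro _ t ht
      have : t = 0 := le_antisymm (by simpa using ht.2) ht.1
      rw [this]
      norm_num
    | succ i ih =>
      intro hin t ht
      have hi : i ≤ n := Nat.le_of_succ_le hin
      by_cases hcase : t ≤ (i:ℝ)/n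
      · have := ih hi t ⟨ht.1, hcase⟩
        have h2 : (2:ℝ)^i ≤ 2^(i+1) := by
          apply pow_le_pow_right₀ (by norm_num) (Nat.le_succ i)
        have h3 : (2:ℝ)^(i+1) - 2 ≤ 2^(i+2) - 2 := by
          have : (2:ℝ)^(i+1) ≤ 2^(i+2) := by
            apply pow_le_pow_right₀ (by norm_num) (Nat.le_succ _)
          linarith
        nlinarith [norm_nonneg (f 0), hGnn]
      · push_neg at hcase
        have hfa : ‖f ((i:ℝ)/n)‖ ≤ 2^i * ‖f 0‖ + (2^(i+1) - 2) * G :=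
          ih hi _ ⟨div_nonneg (Nat.cast_nonneg i) hnpos.le, le_refl _⟩
        have ha0 : (0:ℝ) ≤ (i:ℝ)/n := div_nonneg (Nat.cast_nonneg i) hnpos.le
        have haa : (i:ℝ)/n ≤ ((i:ℝ)+1)/n := by
          gcongr
          linarith
        have ha1 : ((i:ℝ)+1)/n ≤ 1 := by
          rw [div_le_one hnpos]
          exact_mod_cast hin
        have hlen : M * (((i:ℝ)+1)/n - (i:ℝ)/n) ≤ 1/2 := by
          have he : ((i:ℝ)+1)/n - (i:ℝ)/n = 1/n := by field_simp; ring
          rw [he]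
          rw [mul_one_div, div_le_div_iff₀ hnpos (by norm_num)]
          linarith
        have htmem : t ∈ Icc ((i:ℝ)/n) (((i:ℝ)+1)/n) := by
          refine ⟨hcase.le, ?_⟩
          have := ht.2
          push_cast at this ⊢
          linarith
        have hstep := interval_step hb h ha0 haa ha1 hlen t htmem
        calc ‖f t‖ ≤ 2*‖f ((i:ℝ)/n)‖ + 2*G := hstep
          _ ≤ 2*(2^i * ‖f 0‖ + (2^(i+1) - 2) * G) + 2*G := by linarith
          _ = 2^(i+1) * ‖f 0‖ + (2^(i+2) - 2) * G := by ring
  intro t ht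
  have h1 : t ∈ Icc (0:ℝ) ((n:ℝ)/n) := by
    rw [div_self hnpos.ne']
    exact ht
  have := claim n le_rfl t h1
  have h2 : (2:ℝ)^(n+1) - 2 ≤ 2^n * 2 := by
    have : (2:ℝ)^(n+1) = 2^n * 2 := by ring
    linarith
  nlinarith [norm_nonneg (f 0), hGnn]


lemma sq_int_norm_le {g : ℝ → ℂ} (hg : IntegrableOn g (Icc (0:ℝ) 1))
    (hg2 : IntegrableOn (fun t => ‖g t‖^2) (Icc (0:ℝ) 1)) :
    (∫ s in Icc (0:ℝ) 1, ‖g s‖)^2 ≤ sqL2 g := by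
  set G : ℝ := ∫ s in Icc (0:ℝ) 1, ‖g s‖ with hGdef
  set Sq : ℝ := sqL2 g with hSdef
  have hμ : (volume (Icc (0:ℝ) 1)).toReal = 1 := by
    rw [Real.volume_Icc]; norm_num
  have hGnn : 0 ≤ G := integral_nonneg fun s => norm_nonneg _
  have hSnn : 0 ≤ Sq := sqL2_nonneg g
  have hkey : ∀ c : ℝ, 0 < c → G ≤ (c + Sq / c) / 2 := by
    intro c hc
    have hint : (∫ s in Icc (0:ℝ) 1, (c + ‖g s‖^2 / c) / 2)
        = (c + Sq / c) / 2 := by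
      rw [integral_div]
      rw [integral_add (integrableOn_const (C := c) (by rw [Real.volume_Icc]; norm_num))
        (hg2.div_const c)]
      rw [setIntegral_const, integral_div]
      rw [measureReal_def, hμ]
      simp [hSdef, sqL2]
    rw [hGdef, ← hint]
    apply setIntegral_mono_on hg.norm
    · exact ((integrableOn_const (C := c) (by rw [Real.volume_Icc]; norm_num)).add
        (hg2.div_const c)).div_const 2
    · exact measurableSet_Icc
    · intro s _
      have h0 : 0 ≤ ‖g s‖ := norm_nonneg _
      have hid : (c + ‖g s‖ ^ 2 / c) / 2 = (c^2 + ‖g s‖^2) / (2*c) := by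
        field_simp
      rw [hid, le_div_iff₀ (by positivity)]
      nlinarith [sq_nonneg (‖g s‖ - c)]
  by_cases hS : Sq = 0
  · have hG0 : G ≤ 0 := by
      apply le_of_forall_pos_le_add
      intro ε hε
      have := hkey ε hε
      rw [hS] at this
      have h2 : (ε + 0 / ε) / 2 ≤ 0 + ε := by
        rw [zero_div]; linarith
      exact this.trans h2
    have : G = 0 := le_antisymm hG0 hGnn
    rw [this, hS]
    norm_num
  · have hSpos : 0 < Sq := lt_of_le_of_ne hSnn (Ne.symm hS)
    have hc : 0 < Real.sqrt Sq := Real.sqrt_pos.2 hSpos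
    have := hkey (Real.sqrt Sq) hc
    have heq : (Real.sqrt Sq + Sq / Real.sqrt Sq) / 2 = Real.sqrt Sq := by
      rw [Real.div_sqrt]; ring
    rw [heq] at this
    calc G^2 ≤ (Real.sqrt Sq)^2 := by nlinarith
      _ = Sq := Real.sq_sqrt hSnn


/-- the single-edge constant -/
def eC (M : ℝ) : ℝ := 8 * 4 ^ (⌈2*M⌉₊ + 1)

lemma g_ptw_bound (h : IsW1 f f') {b : ℂ} {M : ℝ} (hb : ‖b‖ ≤ M) :
    ∀ t, ‖f' t + b * f t‖^2 ≤ 2*‖f' t‖^2 + 2*M^2*‖f t‖^2 := by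
  intro t
  have h1 : ‖f' t + b * f t‖ ≤ ‖f' t‖ + M * ‖f t‖ := by
    refine (norm_add_le _ _).trans ?_
    gcongr
    rw [norm_mul]
    exact mul_le_mul_of_nonneg_right hb (norm_nonneg _)
  have hM : 0 ≤ M := le_trans (norm_nonneg b) hb
  have h2 : (0:ℝ) ≤ ‖f' t‖ + M * ‖f t‖ :=
    add_nonneg (norm_nonneg _) (mul_nonneg hM (norm_nonneg _))
  nlinarith [norm_nonneg (f' t), norm_nonneg (f t), sq_nonneg (‖f' t‖ - M*‖f t‖),
    norm_nonneg (f' t + b * f t)]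

lemma g_sq_intOn (h : IsW1 f f') (b : ℂ) :
    IntegrableOn (fun t => ‖f' t + b * f t‖^2) (Icc (0:ℝ) 1) := by
  have hgm : AEStronglyMeasurable (fun t => ‖f' t + b * f t‖^2)
      (volume.restrict (Icc (0:ℝ) 1)) := by
    have := (g_intOn h b).aestronglyMeasurable.norm
    exact this.pow 2
  refine Integrable.mono' ((h.2.1.const_mul 2).add
    (((sq_intOn h).const_mul (2*‖b‖^2)))) hgm ?_
  refine Filter.Eventually.of_forall fun t => ?_
  have := g_ptw_bound h (le_refl ‖b‖) t
  rw [Real.norm_eq_abs, abs_of_nonneg (pow_nonneg (norm_nonneg _) 2)]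
  exact this

lemma sqL2_g_le (h : IsW1 f f') {b : ℂ} {M : ℝ} (hb : ‖b‖ ≤ M) :
    sqL2 (fun t => f' t + b * f t) ≤ 2*sqL2 f' + 2*M^2*sqL2 f := by
  have hint : sqL2 (fun t => f' t + b * f t)
      ≤ ∫ t in Icc (0:ℝ) 1, (2*‖f' t‖^2 + 2*M^2*‖f t‖^2) := by
    apply setIntegral_mono_on (g_sq_intOn h b)
      ((h.2.1.const_mul 2).add ((sq_intOn h).const_mul (2*M^2))) measurableSet_Icc
    exact fun t _ => g_ptw_bound h hb t
  rw [integral_add (h.2.1.const_mul 2) ((sq_intOn h).const_mul (2*M^2))] at hint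
  rw [integral_const_mul, integral_const_mul] at hint
  simpa [sqL2] using hint

lemma eC_nonneg (M : ℝ) : 0 ≤ eC M := by rw [eC]; positivity

lemma edge_est {M : ℝ} (hM : 0 ≤ M) {b : ℂ} (hb : ‖b‖ ≤ M)
    (h : IsW1 f f') :
    sqL2 f ≤ eC M * (‖f 0‖^2 + sqL2 (fun t => f' t + b * f t)) ∧
    ‖f 1‖^2 ≤ eC M * (‖f 0‖^2 + sqL2 (fun t => f' t + b * f t)) := by
  set n : ℕ := ⌈2*M⌉₊ + 1 with hn
  have hn2M : 2 * M ≤ n := by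
    have := Nat.le_ceil (2*M)
    push_cast [hn]
    linarith
  have hn1 : 1 ≤ n := Nat.le_add_left 1 _
  set G : ℝ := ∫ s in Icc (0:ℝ) 1, ‖f' s + b * f s‖ with hG
  have hGnn : 0 ≤ G := integral_nonneg fun s => norm_nonneg _
  set Sq : ℝ := sqL2 (fun t => f' t + b * f t) with hSq
  have hSnn : 0 ≤ Sq := sqL2_nonneg _
  have hG2 : G^2 ≤ Sq := sq_int_norm_le (g_intOn h b) (g_sq_intOn h b)
  have hgb := global_bound hb h hn2M hn1
  set P : ℝ := 2^n * (‖f 0‖ + 2 * G) with hP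
  have hPnn : 0 ≤ P := by positivity
  have hsq : ∀ t ∈ Icc (0:ℝ) 1, ‖f t‖^2 ≤ P^2 := by
    intro t ht
    have := hgb t ht
    nlinarith [norm_nonneg (f t)]
  have hPle : P^2 ≤ eC M * (‖f 0‖^2 + Sq) := by
    have h1 : P^2 = 4^n * (‖f 0‖ + 2*G)^2 := by
      rw [hP, mul_pow, ← pow_mul, mul_comm n 2, pow_mul]
      norm_num
    have h2 : (‖f 0‖ + 2*G)^2 ≤ 2*‖f 0‖^2 + 8*G^2 := by
      nlinarith [sq_nonneg (‖f 0‖ - 2*G)]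
    have h3 : (4:ℝ)^n > 0 := by positivity
    calc P^2 = 4^n * (‖f 0‖ + 2*G)^2 := h1
      _ ≤ 4^n * (2*‖f 0‖^2 + 8*G^2) := by nlinarith
      _ ≤ 4^n * (8*‖f 0‖^2 + 8*Sq) := by nlinarith [norm_nonneg (f 0)]
      _ = eC M * (‖f 0‖^2 + Sq) := by rw [eC]; ring
  constructor
  · have hint : sqL2 f ≤ ∫ t in Icc (0:ℝ) 1, P^2 := by
      apply setIntegral_mono_on (sq_intOn h)
        (integrableOn_const (C := P^2) (by rw [Real.volume_Icc]; norm_num))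
        measurableSet_Icc
      exact hsq
    have hconst : (∫ t in Icc (0:ℝ) 1, P^2) = P^2 := by
      rw [setIntegral_const, Real.volume_real_Icc]
      norm_num
    calc sqL2 f ≤ P^2 := by rw [← hconst]; exact hint
      _ ≤ _ := hPle
  · calc ‖f 1‖^2 ≤ P^2 := hsq 1 (by norm_num)
      _ ≤ _ := hPle



section Tree
variable (S : TreeSetup)

lemma odd_pos' {i : ℕ} (hi : Odd i) : 1 ≤ i := by
  rcases hi with ⟨m, rfl⟩; omega

lemma ptil_nonneg (j : ℕ) (hj : 2 ≤ j) : 0 ≤ S.ptil j := by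
  have hodd := S.hk_odd j hj
  obtain ⟨l, hl⟩ := S.henum_surj (S.k j) j hodd hj rfl
  have h := S.hptil_enum (S.k j) l hodd
  rw [hl] at h
  rw [h]
  exact (S.hp_pos l).le

lemma alpha_nonneg : ∀ j, 0 ≤ S.α j := by
  have key : ∀ n j, 1 ≤ j → S.nu j = n → 0 ≤ S.α j := by
    intro n
    induction n with
    | zero =>
      intro j hj hnu
      rcases eq_or_lt_of_le hj with h1 | h2
      · rw [← h1, S.hα1]; norm_num
      · exfalso; have := S.hnu_rec j h2; omega
    | succ n ih =>
      intro j hj hnu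
      rcases eq_or_lt_of_le hj with h1 | h2
      · rw [← h1, S.hα1]; norm_num
      · have hrec := S.hα_rec j h2
        have hodd := S.hk_odd j h2
        have hk1 : 1 ≤ S.k j := odd_pos' hodd
        have hnk : S.nu (S.k j) = n := by have := S.hnu_rec j h2; omega
        rw [hrec]
        exact mul_nonneg (ptil_nonneg S j h2) (ih (S.k j) hk1 hnk)
  intro j
  rcases Nat.eq_zero_or_pos j with h | h
  · rw [h, S.hα0]
  · exact key (S.nu j) j h rfl

lemma alpha_enum (i l : ℕ) (hi : Odd i) : S.α (S.enum i l) = S.p l * S.α i := by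
  rw [S.hα_rec _ (S.henum_ge i l hi), S.hptil_enum i l hi, S.henum_k i l hi]

open scoped ENNReal

lemma reindex (F : ℕ → ℝ≥0∞) :
    (∑' j : ℕ, if 2 ≤ j then ENNReal.ofReal (S.α j) * F (S.k j) else 0)
      = ∑' i : ℕ, if Odd i then ENNReal.ofReal (S.α i) * F i else 0 := by
  classical
  have hL : (∑' j : ℕ, if 2 ≤ j then ENNReal.ofReal (S.α j) * F (S.k j) else 0)
      = ∑' j : {j : ℕ | 2 ≤ j}, ENNReal.ofReal (S.α j) * F (S.k j) := by
    rw [tsum_subtype {j : ℕ | 2 ≤ j} (fun j => ENNReal.ofReal (S.α j) * F (S.k j))]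
    exact tsum_congr fun j => by simp [Set.indicator_apply, Set.mem_setOf_eq]
  have hR : (∑' i : ℕ, if Odd i then ENNReal.ofReal (S.α i) * F i else 0)
      = ∑' i : {i : ℕ | Odd i}, ENNReal.ofReal (S.α i) * F i := by
    rw [tsum_subtype {i : ℕ | Odd i} (fun i => ENNReal.ofReal (S.α i) * F i)]
    exact tsum_congr fun i => by simp [Set.indicator_apply, Set.mem_setOf_eq]
  let e : (Σ _i : {i : ℕ | Odd i}, ℕ) → {j : ℕ | 2 ≤ j} :=
    fun x => ⟨S.enum x.1.1 x.2, S.henum_ge _ _ x.1.2⟩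
  have hinj : Function.Injective e := by
    rintro ⟨⟨i, hi⟩, l⟩ ⟨⟨i', hi'⟩, l'⟩ hx
    have hx' : S.enum i l = S.enum i' l' := congrArg Subtype.val hx
    have hii : i = i' := by
      have h1 := S.henum_k i l hi
      have h2 := S.henum_k i' l' hi'
      rw [← h1, ← h2, hx']
    subst hii
    have hll : l = l' := S.henum_inj i hi hx'
    subst hll; rfl
  have hsurj : Function.Surjective e := by
    rintro ⟨j, hj⟩
    have hodd := S.hk_odd j hj
    obtain ⟨l, hl⟩ := S.henum_surj (S.k j) j hodd hj rfl
    exact ⟨⟨⟨S.k j, hodd⟩, l⟩, Subtype.ext hl⟩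
  let E : (Σ _i : {i : ℕ | Odd i}, ℕ) ≃ {j : ℕ | 2 ≤ j} :=
    Equiv.ofBijective e ⟨hinj, hsurj⟩
  have hEq := E.tsum_eq (fun j : {j : ℕ | 2 ≤ j} => ENNReal.ofReal (S.α j.1) * F (S.k j.1))
  rw [hL, ← hEq, ENNReal.tsum_sigma', hR]
  apply tsum_congr
  rintro ⟨i, hi⟩
  have hterm : ∀ l, ENNReal.ofReal (S.α (S.enum i l)) * F (S.k (S.enum i l))
      = ENNReal.ofReal (S.p l) * (ENNReal.ofReal (S.α i) * F i) := by
    intro l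
    rw [S.henum_k i l hi, alpha_enum S i l hi,
      ENNReal.ofReal_mul (S.hp_pos l).le, mul_assoc]
  calc (∑' l, ENNReal.ofReal (S.α (S.enum i l)) * F (S.k (S.enum i l)))
      = ∑' l, ENNReal.ofReal (S.p l) * (ENNReal.ofReal (S.α i) * F i) :=
        tsum_congr hterm
    _ = (∑' l, ENNReal.ofReal (S.p l)) * (ENNReal.ofReal (S.α i) * F i) :=
        ENNReal.tsum_mul_right
    _ = ENNReal.ofReal (S.α i) * F i := by
        rw [← ENNReal.ofReal_tsum_of_nonneg (fun l => (S.hp_pos l).le) S.hp_sum.summable,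
          S.hp_sum.tsum_eq]
        simp

end Tree

end TreePoincare

open scoped ENNReal

/-- A Poincaré-type estimate on the tree: there is a constant `C`
depending only on `T` and `M = sup_j |b_j|` such that for every `y ∈ W¹_{2,α}` with
`y₁(0) = 0` and the matching conditions (10),
`Σ_j α_j ∫₀¹ |y_j|² ≤ C Σ_j α_j ∫₀¹ |y_j' + b_j y_j|²`. -/
theorem tree_poincare_estimate (T : ℕ) (M : ℝ) :
    ∃ C : ℝ, ∀ S : TreeSetup, S.T = T →
      (∀ j, 1 ≤ j → ‖S.b j‖ ≤ M) →
      ∀ y y' : ℕ → ℝ → ℂ, MemW1α S y y' → y 1 0 = 0 →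
        (∀ j, 2 ≤ j → y (S.k j) 1 = y j 0) →
        ∑' j, S.α j * sqL2 (y j) ≤
          C * ∑' j, S.α j * sqL2 (fun t => y' j t + S.b j * y j t) := by
  classical
  set Mp : ℝ := max M 0 with hMp
  have hMp0 : 0 ≤ Mp := le_max_right _ _
  set Ce : ℝ := TreePoincare.eC Mp with hCe
  have hCe0 : 0 ≤ Ce := TreePoincare.eC_nonneg Mp
  have hC0 : 0 ≤ Ce * ((T:ℝ) * (Ce + 1)^T) + Ce := by positivity
  refine ⟨Ce * ((T:ℝ) * (Ce + 1)^T) + Ce, ?_⟩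
  intro S hST hb y y' hy hinit hmatch
  obtain ⟨hy1, hy2⟩ := hy
  have hα := TreePoincare.alpha_nonneg S
  have hbM : ∀ j, 1 ≤ j → ‖S.b j‖ ≤ Mp :=
    fun j hj => (hb j hj).trans (le_max_left _ _)
  have hedge : ∀ j, 1 ≤ j →
      sqL2 (y j) ≤ Ce * (‖y j 0‖^2 + sqL2 (fun t => y' j t + S.b j * y j t)) ∧
      ‖y j 1‖^2 ≤ Ce * (‖y j 0‖^2 + sqL2 (fun t => y' j t + S.b j * y j t)) :=
    fun j hj => TreePoincare.edge_est hMp0 (hbM j hj) (hy1 j hj)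
  set A : ℕ → ℝ≥0∞ := fun j => ENNReal.ofReal (S.α j) with hA
  set Yt : ℕ → ℝ≥0∞ := fun j => A j * ENNReal.ofReal (sqL2 (y j)) with hYt
  set N0 : ℕ → ℝ≥0∞ := fun j => A j * ENNReal.ofReal (‖y j 0‖^2) with hN0
  set N1 : ℕ → ℝ≥0∞ := fun j => A j * ENNReal.ofReal (‖y j 1‖^2) with hN1
  set Et : ℕ → ℝ≥0∞ :=
    fun j => A j * ENNReal.ofReal (sqL2 (fun t => y' j t + S.b j * y j t)) with hEt
  set E : ℝ≥0∞ := ∑' j, Et j with hE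
  set Cl : ℝ≥0∞ := ENNReal.ofReal Ce with hCl
  have hedgeE : ∀ j, 1 ≤ j →
      Yt j ≤ Cl * N0 j + Cl * Et j ∧ N1 j ≤ Cl * N0 j + Cl * Et j := by
    intro j hj
    obtain ⟨h1, h2⟩ := hedge j hj
    have conv : ∀ r : ℝ,
        r ≤ Ce * (‖y j 0‖^2 + sqL2 (fun t => y' j t + S.b j * y j t)) →
        A j * ENNReal.ofReal r ≤ Cl * N0 j + Cl * Et j := by
      intro r hr
      have step : ENNReal.ofReal r ≤
          Cl * (ENNReal.ofReal (‖y j 0‖^2) +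
            ENNReal.ofReal (sqL2 (fun t => y' j t + S.b j * y j t))) := by
        rw [← ENNReal.ofReal_add (sq_nonneg _) (TreePoincare.sqL2_nonneg _),
          hCl, ← ENNReal.ofReal_mul hCe0]
        exact ENNReal.ofReal_le_ofReal hr
      calc A j * ENNReal.ofReal r
          ≤ A j * (Cl * (ENNReal.ofReal (‖y j 0‖^2) +
              ENNReal.ofReal (sqL2 (fun t => y' j t + S.b j * y j t)))) :=
            mul_le_mul_right step _
        _ = Cl * N0 j + Cl * Et j := by rw [hN0, hEt]; ring
    exact ⟨conv _ h1, conv _ h2⟩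
  -- depth sums
  set Φ : ℕ → ℝ≥0∞ := fun d => ∑' j, if 1 ≤ j ∧ S.nu j + 1 = d then N0 j else 0 with hΦ
  set Ψ : ℕ → ℝ≥0∞ := fun d => ∑' j, if 1 ≤ j ∧ S.nu j + 1 = d then N1 j else 0 with hΨ
  have hΦ1 : Φ 1 = 0 := by
    rw [hΦ]
    refine ENNReal.tsum_eq_zero.mpr fun j => ?_
    split_ifs with h
    · obtain ⟨hj, hd⟩ := h
      have hj1 : j = 1 := by
        by_contra hne
        have h2 : 2 ≤ j := by omega
        have := S.hnu_rec j h2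
        omega
      subst hj1
      simp [hN0, hinit]
    · rfl
  have hΨΦ : ∀ d, Ψ d ≤ Cl * Φ d + Cl * E := by
    intro d
    have hterm : ∀ j, (if 1 ≤ j ∧ S.nu j + 1 = d then N1 j else 0)
        ≤ Cl * (if 1 ≤ j ∧ S.nu j + 1 = d then N0 j else 0) + Cl * Et j := by
      intro j
      split_ifs with h
      · exact (hedgeE j h.1).2
      · exact zero_le
    calc Ψ d ≤ ∑' j, (Cl * (if 1 ≤ j ∧ S.nu j + 1 = d then N0 j else 0) + Cl * Et j) :=
          Summable.tsum_le_tsum hterm ENNReal.summable ENNReal.summable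
      _ = Cl * Φ d + Cl * E := by
          rw [Summable.tsum_add ENNReal.summable ENNReal.summable,
            ENNReal.tsum_mul_left, ENNReal.tsum_mul_left, hΦ, hE]
  have hΦΨ : ∀ d, 1 ≤ d → Φ (d+1) ≤ Ψ d := by
    intro d hd
    set F : ℕ → ℝ≥0∞ :=
      fun i => if S.nu i + 1 = d then ENNReal.ofReal (‖y i 1‖^2) else 0 with hF
    have hstep : ∀ j, (if 1 ≤ j ∧ S.nu j + 1 = d + 1 then N0 j else 0)
        = (if 2 ≤ j then A j * F (S.k j) else 0) := by
      intro j
      by_cases h2 : 2 ≤ j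
      · rw [if_pos h2]
        have hrec := S.hnu_rec j h2
        by_cases hdj : S.nu j + 1 = d + 1
        · have hkd : S.nu (S.k j) + 1 = d := by omega
          rw [if_pos ⟨by omega, hdj⟩]
          simp only [hF, if_pos hkd, hN0]
          rw [← hmatch j h2]
        · have hkd : ¬(S.nu (S.k j) + 1 = d) := by omega
          rw [if_neg (by tauto)]
          simp only [hF, if_neg hkd, mul_zero]
      · rw [if_neg h2]
        by_cases hc : 1 ≤ j ∧ S.nu j + 1 = d + 1
        · exfalso
          have hj1 : j = 1 := by omega
          rw [hj1, S.hnu1] at hc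
          omega
        · rw [if_neg hc]
    have hre := TreePoincare.reindex S F
    have hterm2 : ∀ i, (if Odd i then A i * F i else 0)
        ≤ (if 1 ≤ i ∧ S.nu i + 1 = d then N1 i else 0) := by
      intro i
      by_cases hodd : Odd i
      · rw [if_pos hodd]
        simp only [hF]
        have h1 : 1 ≤ i := TreePoincare.odd_pos' hodd
        by_cases hdi : S.nu i + 1 = d
        · rw [if_pos hdi, if_pos (⟨h1, hdi⟩ : 1 ≤ i ∧ S.nu i + 1 = d)]
        · rw [if_neg hdi, if_neg (by tauto), mul_zero]
      · rw [if_neg hodd]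
        exact zero_le
    calc Φ (d+1) = ∑' j, (if 2 ≤ j then A j * F (S.k j) else 0) := by
          rw [hΦ]; exact tsum_congr hstep
      _ = ∑' i, (if Odd i then A i * F i else 0) := hre
      _ ≤ Ψ d := by rw [hΨ]; exact Summable.tsum_le_tsum hterm2 ENNReal.summable ENNReal.summable
  have hone : (1:ℝ≥0∞) ≤ Cl + 1 := le_add_self
  have hΦbound : ∀ d, 1 ≤ d → Φ d ≤ (Cl + 1)^d * E := by
    intro d hd
    induction d with
    | zero => omega
    | succ d ih =>
      rcases Nat.eq_zero_or_pos d with h0 | h1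
      · subst h0
        rw [hΦ1]
        exact zero_le
      · have h2 := (hΦΨ d h1).trans (hΨΦ d)
        have h3 : Cl * Φ d + Cl * E ≤ Cl * ((Cl+1)^d * E) + Cl * E := by
          gcongr
          exact ih h1
        have h4 : Cl * ((Cl+1)^d * E) + Cl * E ≤ (Cl+1)^(d+1) * E := by
          have hexp : (Cl+1)^(d+1) = Cl * (Cl+1)^d + (Cl+1)^d := by ring
          rw [hexp, add_mul, mul_assoc]
          gcongr
          calc Cl ≤ Cl + 1 := le_self_add
            _ ≤ (Cl+1)^d := by
                conv_lhs => rw [← pow_one (Cl+1)]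
                exact pow_le_pow_right₀ hone h1
        exact h2.trans (h3.trans h4)
  have hN0sum : (∑' j, N0 j) ≤ ∑ d ∈ Finset.range T, Φ (d+1) := by
    have hptw : ∀ j, N0 j ≤
        ∑ d ∈ Finset.range T, (if 1 ≤ j ∧ S.nu j + 1 = d + 1 then N0 j else 0) := by
      intro j
      rcases Nat.eq_zero_or_pos j with h0 | h1
      · subst h0
        have hz : N0 0 = 0 := by simp [hN0, hA, S.hα0]
        rw [hz]
        exact zero_le
      · have hdT : S.nu j + 1 ≤ S.T := by
          rcases Nat.even_or_odd j with he | ho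
          · have h2 : 2 ≤ j := by
              rcases he with ⟨m, hm⟩; omega
            exact (S.hdepth_boundary j h2 he).le
          · exact (S.hdepth_internal j ho).le
        rw [hST] at hdT
        have hmem : S.nu j ∈ Finset.range T := Finset.mem_range.mpr (by omega)
        have := Finset.single_le_sum
          (f := fun d => if 1 ≤ j ∧ S.nu j + 1 = d + 1 then N0 j else 0)
          (fun d _ => zero_le) hmem
        have h1' : 1 ≤ j := h1
        simpa [h1'] using this
    calc (∑' j, N0 j)
        ≤ ∑' j, ∑ d ∈ Finset.range T, (if 1 ≤ j ∧ S.nu j + 1 = d + 1 then N0 j else 0) :=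
          Summable.tsum_le_tsum hptw ENNReal.summable ENNReal.summable
      _ = ∑ d ∈ Finset.range T, Φ (d+1) := by
          rw [Summable.tsum_finsetSum (fun i _ => ENNReal.summable)]
  have hN0T : (∑' j, N0 j) ≤ (T:ℝ≥0∞) * ((Cl+1)^T * E) := by
    refine hN0sum.trans ?_
    have hTd : ∀ d ∈ Finset.range T, Φ (d+1) ≤ (Cl+1)^T * E := by
      intro d hd
      have hdT : d + 1 ≤ T := Finset.mem_range.mp hd
      refine (hΦbound (d+1) (by omega)).trans ?_
      exact mul_le_mul_left (pow_le_pow_right₀ hone hdT) E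
    calc ∑ d ∈ Finset.range T, Φ (d+1) ≤ ∑ _d ∈ Finset.range T, (Cl+1)^T * E :=
          Finset.sum_le_sum hTd
      _ = (T:ℝ≥0∞) * ((Cl+1)^T * E) := by
          rw [Finset.sum_const, Finset.card_range, nsmul_eq_mul]
  have htot : (∑' j, Yt j) ≤ (Cl * ((T:ℝ≥0∞) * (Cl+1)^T) + Cl) * E := by
    have hterm : ∀ j, Yt j ≤ Cl * N0 j + Cl * Et j := by
      intro j
      rcases Nat.eq_zero_or_pos j with h0 | h1
      · subst h0
        have hz : Yt 0 = 0 := by simp [hYt, hA, S.hα0]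
        rw [hz]
        exact zero_le
      · exact (hedgeE j h1).1
    calc (∑' j, Yt j) ≤ ∑' j, (Cl * N0 j + Cl * Et j) :=
          Summable.tsum_le_tsum hterm ENNReal.summable ENNReal.summable
      _ = Cl * (∑' j, N0 j) + Cl * E := by
          rw [Summable.tsum_add ENNReal.summable ENNReal.summable,
            ENNReal.tsum_mul_left, ENNReal.tsum_mul_left, hE]
      _ ≤ Cl * ((T:ℝ≥0∞) * ((Cl+1)^T * E)) + Cl * E := by gcongr
      _ = (Cl * ((T:ℝ≥0∞) * (Cl+1)^T) + Cl) * E := by ring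
  -- summability of the real series
  have hsumY : Summable (fun j => S.α j * sqL2 (y j)) := by
    refine Summable.of_nonneg_of_le
      (fun j => mul_nonneg (hα j) (TreePoincare.sqL2_nonneg _)) (fun j => ?_) hy2
    exact mul_le_mul_of_nonneg_left
      (le_add_of_nonneg_right (TreePoincare.sqL2_nonneg _)) (hα j)
  have hsumE : Summable (fun j => S.α j * sqL2 (fun t => y' j t + S.b j * y j t)) := by
    refine Summable.of_nonneg_of_le
      (fun j => mul_nonneg (hα j) (TreePoincare.sqL2_nonneg _)) (fun j => ?_)
      (hy2.mul_left (2 + 2*Mp^2))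
    rcases Nat.eq_zero_or_pos j with h0 | h1
    · subst h0
      rw [S.hα0]
      simp
    · have hgle := TreePoincare.sqL2_g_le (hy1 j h1) (hbM j h1)
      have h2 : S.α j * sqL2 (fun t => y' j t + S.b j * y j t)
          ≤ S.α j * (2*sqL2 (y' j) + 2*Mp^2*sqL2 (y j)) :=
        mul_le_mul_of_nonneg_left hgle (hα j)
      refine h2.trans ?_
      have hY := TreePoincare.sqL2_nonneg (y j)
      have hY' := TreePoincare.sqL2_nonneg (y' j)
      have hαj := hα j
      nlinarith [sq_nonneg Mp, mul_nonneg hαj hY, mul_nonneg hαj hY', sq_nonneg (Mp*Mp)]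
  -- convert to ofReal
  have hofY : ENNReal.ofReal (∑' j, S.α j * sqL2 (y j)) = ∑' j, Yt j := by
    rw [ENNReal.ofReal_tsum_of_nonneg
      (fun j => mul_nonneg (hα j) (TreePoincare.sqL2_nonneg _)) hsumY]
    refine tsum_congr fun j => ?_
    simp only [hYt, hA]
    exact ENNReal.ofReal_mul (hα j)
  have hofE : ENNReal.ofReal (∑' j, S.α j * sqL2 (fun t => y' j t + S.b j * y j t)) = E := by
    rw [ENNReal.ofReal_tsum_of_nonneg
      (fun j => mul_nonneg (hα j) (TreePoincare.sqL2_nonneg _)) hsumE, hE]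
    refine tsum_congr fun j => ?_
    simp only [hEt, hA]
    exact ENNReal.ofReal_mul (hα j)
  have hCconv : (Cl * ((T:ℝ≥0∞) * (Cl+1)^T) + Cl)
      = ENNReal.ofReal (Ce * ((T:ℝ) * (Ce + 1)^T) + Ce) := by
    rw [ENNReal.ofReal_add (by positivity) hCe0,
      ENNReal.ofReal_mul hCe0,
      ENNReal.ofReal_mul (by positivity : (0:ℝ) ≤ (T:ℝ)),
      ENNReal.ofReal_pow (by positivity : (0:ℝ) ≤ Ce + 1),
      ENNReal.ofReal_add hCe0 zero_le_one, ENNReal.ofReal_one,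
      ENNReal.ofReal_natCast, hCl]
  have hfin : ENNReal.ofReal (∑' j, S.α j * sqL2 (y j))
      ≤ ENNReal.ofReal ((Ce * ((T:ℝ) * (Ce + 1)^T) + Ce) *
        ∑' j, S.α j * sqL2 (fun t => y' j t + S.b j * y j t)) := by
    rw [hofY, ENNReal.ofReal_mul hC0, hofE, ← hCconv]
    exact htot
  have hRnn : 0 ≤ (Ce * ((T:ℝ) * (Ce + 1)^T) + Ce) *
      ∑' j, S.α j * sqL2 (fun t => y' j t + S.b j * y j t) :=
    mul_nonneg hC0 (tsum_nonneg fun j => mul_nonneg (hα j) (TreePoincare.sqL2_nonneg _))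
  exact (ENNReal.ofReal_le_ofReal_iff hRnn).mp hfin
end
end
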